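/- Fix positive integers d and L, and type sequences w, v ∈ {+,−}^k having the same number of '+' entries p and the same number of '−' entries q. Fix (d,L)-staircases μ and λ, and vectors a ∈ ℕ^p, b ∈ ℕ^q. Then the number of skew (d,L)-cylindric row-strict w-oscillating tableaux with inner shape μ, outer shape λ, wt⁺ = a and wt⁻ = b equals the number of skew (d,L)-cylindric row-strict v-oscillating tableaux with inner shape μ, outer shape λ, wt⁺ = a and wt⁻ = b. -/

import Mathlib

/-- `α ≺'_{(d,L)} β` for `d`-staircases: both are `(d,L)`-staircases (weakly decreasing
integer tuples with `λ₁ - λ_d ≤ L`) and `β_i - α_i ∈ {0,1}` for all `i` (0-indexed). -/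
def CoCylInterlace (d L : ℕ) (α β : Fin d → ℤ) : Prop :=
  Antitone α ∧ Antitone β ∧
  (∀ h : 0 < d,
    α ⟨0, h⟩ - α ⟨d - 1, Nat.sub_lt h Nat.one_pos⟩ ≤ (L : ℤ) ∧
    β ⟨0, h⟩ - β ⟨d - 1, Nat.sub_lt h Nat.one_pos⟩ ≤ (L : ℤ)) ∧
  ∀ i, β i = α i ∨ β i = α i + 1

/-- `T` is a skew `(d,L)`-cylindric row-strict `w`-oscillating tableau with inner shape
`μ` and outer shape `lam`: a sequence of `d`-staircases with `λ⁽ⁱ⁻¹⁾ ≺'_{(d,L)} λ⁽ⁱ⁾`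
when `w i = +` (here `true`) and `λ⁽ⁱ⁾ ≺'_{(d,L)} λ⁽ⁱ⁻¹⁾` when `w i = −`
(here `false`). -/
def IsSkewRowStrictOsc (d L k : ℕ) (w : Fin k → Bool) (μ lam : Fin d → ℤ)
    (T : Fin (k + 1) → Fin d → ℤ) : Prop :=
  T 0 = μ ∧ T (Fin.last k) = lam ∧
  ∀ i : Fin k,
    if w i then CoCylInterlace d L (T i.castSucc) (T i.succ)
    else CoCylInterlace d L (T i.succ) (T i.castSucc)

/-- `T` has `wt⁺ = a`: for each `i`, the size increase across the `i`-th occurrence of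
`+` in `w` is `a i`. -/
def HasWtPlus (d k p : ℕ) (w : Fin k → Bool)
    (hp : (Finset.univ.filter fun i : Fin k => w i = true).card = p)
    (T : Fin (k + 1) → Fin d → ℤ) (a : Fin p → ℕ) : Prop :=
  ∀ i : Fin p,
    (∑ j, T (Fin.succ ((Finset.univ.filter fun i : Fin k => w i = true).orderIsoOfFin hp i).1) j) =
    (∑ j, T (Fin.castSucc
        ((Finset.univ.filter fun i : Fin k => w i = true).orderIsoOfFin hp i).1) j) + (a i : ℤ)

/-- `T` has `wt⁻ = b`: for each `i`, the size decrease across the `i`-th-to-last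
occurrence of `−` in `w` is `b i`. -/
def HasWtMinus (d k q : ℕ) (w : Fin k → Bool)
    (hq : (Finset.univ.filter fun i : Fin k => w i = false).card = q)
    (T : Fin (k + 1) → Fin d → ℤ) (b : Fin q → ℕ) : Prop :=
  ∀ i : Fin q,
    (∑ j, T (Fin.castSucc
        ((Finset.univ.filter fun i : Fin k => w i = false).orderIsoOfFin hq i.rev).1) j) =
    (∑ j, T (Fin.succ
        ((Finset.univ.filter fun i : Fin k => w i = false).orderIsoOfFin hq i.rev).1) j) + (b i : ℤ)

namespace SkewRS


def res (d : ℕ) (hd : 0 < d) (n : ℤ) : Fin d :=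
  ⟨(n % (d:ℤ)).toNat, by
    have hd' : (0:ℤ) < (d:ℤ) := by exact_mod_cast hd
    have h0 : (0:ℤ) ≤ n % (d:ℤ) := Int.emod_nonneg n (by omega)
    have h1 : n % (d:ℤ) < (d:ℤ) := Int.emod_lt_of_pos n hd'
    omega⟩

lemma res_val {d : ℕ} (hd : 0 < d) (n : ℤ) : ((res d hd n : ℕ) : ℤ) = n % (d:ℤ) := by
  have hd' : (0:ℤ) < (d:ℤ) := by exact_mod_cast hd
  have h0 : (0:ℤ) ≤ n % (d:ℤ) := Int.emod_nonneg n (by omega)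
  simp [res, Int.toNat_of_nonneg h0]

lemma res_coe {d : ℕ} (hd : 0 < d) (i : Fin d) : res d hd (i : ℤ) = i := by
  apply Fin.ext
  have h1 : ((i:ℤ)) % (d:ℤ) = (i:ℤ) := Int.emod_eq_of_lt (by positivity) (by exact_mod_cast i.2)
  have := res_val hd (i : ℤ)
  omega

lemma res_eq_of_dvd {d : ℕ} (hd : 0 < d) {a b : ℤ} (h : (d:ℤ) ∣ a - b) :
    res d hd a = res d hd b := by
  apply Fin.ext
  have h1 : a % (d:ℤ) = b % (d:ℤ) :=
    Int.emod_eq_emod_iff_emod_sub_eq_zero.mpr (Int.emod_eq_zero_of_dvd h)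
  have := res_val hd a; have := res_val hd b
  omega

lemma dvd_of_res_eq {d : ℕ} (hd : 0 < d) {a b : ℤ} (h : res d hd a = res d hd b) :
    (d:ℤ) ∣ a - b := by
  have h1 : a % (d:ℤ) = b % (d:ℤ) := by
    have := res_val hd a; have := res_val hd b
    rw [Fin.ext_iff] at h
    omega
  rw [Int.emod_eq_emod_iff_emod_sub_eq_zero] at h1
  exact Int.dvd_of_emod_eq_zero h1

lemma step_mod {d : ℕ} (hd : 0 < d) (n : ℤ) :
    ((n+1) % (d:ℤ) = n % d + 1 ∧ (n+1) / (d:ℤ) = n / d) ∨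
    (n % (d:ℤ) = d - 1 ∧ (n+1) % (d:ℤ) = 0 ∧ (n+1) / (d:ℤ) = n / d + 1) := by
  have hd' : (0:ℤ) < (d:ℤ) := by exact_mod_cast hd
  have h0 : (0:ℤ) ≤ n % (d:ℤ) := Int.emod_nonneg n (by omega)
  have h1 : n % (d:ℤ) < (d:ℤ) := Int.emod_lt_of_pos n hd'
  have hid : n % (d:ℤ) + (d:ℤ) * (n / d) = n := Int.emod_add_mul_ediv n d
  rcases eq_or_lt_of_le (by omega : n % (d:ℤ) ≤ (d:ℤ) - 1) with he | hlt
  · right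
    have hexp : n + 1 = (d:ℤ) * (n / d + 1) := by rw [mul_add]; omega
    have hdiv : (n+1) / (d:ℤ) = n / d + 1 := by
      rw [hexp, Int.mul_ediv_cancel_left _ (by omega)]
    have hmod : (n+1) % (d:ℤ) = 0 := by
      rw [hexp]; exact Int.mul_emod_right _ _
    exact ⟨he, hmod, hdiv⟩
  · left
    have h2 : n + 1 = (n % d + 1) + (d:ℤ) * (n / d) := by omega
    constructor
    · conv_lhs => rw [h2]
      rw [Int.add_mul_emod_self_left]
      exact Int.emod_eq_of_lt (by omega) (by omega)
    · conv_lhs => rw [h2]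
      rw [Int.add_mul_ediv_left _ _ (by omega : (d:ℤ) ≠ 0)]
      rw [Int.ediv_eq_zero_of_lt (by omega) (by omega)]
      omega

variable {d L : ℕ}

def Ext (L : ℕ) {d : ℕ} (hd : 0 < d) (f : Fin d → ℤ) (n : ℤ) : ℤ :=
  f (res d hd n) - L * (n / d)

lemma Ext_coe (hd : 0 < d) (f : Fin d → ℤ) (i : Fin d) : Ext L hd f i = f i := by
  unfold Ext
  rw [res_coe hd i, Int.ediv_eq_zero_of_lt (by positivity) (by exact_mod_cast i.2)]
  ring

lemma Ext_add_d (hd : 0 < d) (f : Fin d → ℤ) (n : ℤ) :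
    Ext L hd f (n + d) = Ext L hd f n - L := by
  unfold Ext
  have h1 : res d hd (n + d) = res d hd n := res_eq_of_dvd hd (by simp)
  have h2 : (n + (d:ℤ)) / d = n / d + 1 := by
    have h : n + (d:ℤ) = n + 1 * d := by ring
    rw [h, Int.add_mul_ediv_right _ _ (by exact_mod_cast hd.ne' : (d:ℤ) ≠ 0)]
  rw [h1, h2]; ring

def IsStair (L : ℕ) {d : ℕ} (hd : 0 < d) (f : Fin d → ℤ) : Prop :=
  Antitone f ∧ f ⟨0, hd⟩ - f ⟨d - 1, Nat.sub_lt hd Nat.one_pos⟩ ≤ (L:ℤ)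

lemma isStair_iff (hd : 0 < d) (f : Fin d → ℤ) :
    IsStair L hd f ↔ ∀ n : ℤ, Ext L hd f (n+1) ≤ Ext L hd f n := by
  constructor
  · rintro ⟨ha, hs⟩ n
    rcases step_mod hd n with ⟨hm, hdiv⟩ | ⟨hmn, hm, hdiv⟩
    · have hle : res d hd n ≤ res d hd (n+1) := by
        rw [Fin.le_def]
        have v1 := res_val hd n; have v2 := res_val hd (n+1)
        omega
      have := ha hle
      unfold Ext
      rw [hdiv]
      omega
    · have e1 : res d hd n = ⟨d - 1, Nat.sub_lt hd Nat.one_pos⟩ := by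
        apply Fin.ext
        have v1 := res_val hd n
        simp only []
        omega
      have e2 : res d hd (n+1) = ⟨0, hd⟩ := by
        apply Fin.ext
        have v2 := res_val hd (n+1)
        simp only []
        omega
      unfold Ext
      rw [e1, e2, hdiv]
      have : (L:ℤ) * (n / d + 1) = L * (n/d) + L := by ring
      omega
  · intro h
    constructor
    · obtain ⟨d', rfl⟩ : ∃ d', d = d' + 1 := ⟨d - 1, by omega⟩
      rw [Fin.antitone_iff_succ_le]
      intro i
      have hn := h (i.castSucc : ℤ)
      have e1 : Ext L hd f (i.castSucc : ℤ) = f i.castSucc := Ext_coe hd f _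
      have e2 : ((i.castSucc : Fin (d'+1)) : ℤ) + 1 = ((i.succ : Fin (d'+1)) : ℤ) := by
        push_cast [Fin.val_succ, Fin.coe_castSucc]
        ring
      rw [e1, e2] at hn
      rw [Ext_coe hd f i.succ] at hn
      exact hn
    · have hn := h ((d:ℤ) - 1)
      have e0 : (d:ℤ) - 1 + 1 = ((0:ℤ) + d) := by ring
      have e1 : Ext L hd f ((d:ℤ) - 1 + 1) = f ⟨0, hd⟩ - L := by
        rw [e0, Ext_add_d hd f 0]
        have : ((( ⟨0, hd⟩ : Fin d) : ℕ) : ℤ) = (0:ℤ) := by simp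
        rw [← this, Ext_coe hd f ⟨0, hd⟩]
      have e2 : Ext L hd f ((d:ℤ) - 1) = f ⟨d - 1, Nat.sub_lt hd Nat.one_pos⟩ := by
        have : (((⟨d - 1, Nat.sub_lt hd Nat.one_pos⟩ : Fin d) : ℕ) : ℤ) = (d:ℤ) - 1 := by
          simp only [Fin.val_mk]
          omega
        rw [← this, Ext_coe hd f _]
      rw [e1, e2] at hn
      omega

lemma Ext_add_mul_d (hd : 0 < d) (f : Fin d → ℤ) (n : ℤ) (c : ℤ) :
    Ext L hd f (n + (d:ℤ) * c) = Ext L hd f n - c * L := by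
  induction c using Int.induction_on with
  | zero => simp
  | succ c ih =>
      have h : n + (d:ℤ) * ((c:ℤ)+1) = (n + (d:ℤ) * c) + d := by ring
      rw [h, Ext_add_d hd f, ih]; ring
  | pred c ih =>
      have h : (n + (d:ℤ) * (-(c:ℤ)-1)) + d = n + (d:ℤ) * (-(c:ℤ)) := by ring
      have h2 := Ext_add_d (L := L) hd f (n + (d:ℤ) * (-(c:ℤ)-1))
      rw [h, ih] at h2
      linear_combination -h2



end SkewRS

namespace SkewRS

open scoped Classical

section Core

variable {d L : ℕ}

def mmt (L : ℕ) {d : ℕ} (hd : 0 < d) (x z : Fin d → ℤ) : ℤ → ℤ :=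
  Ext L hd (fun i => min (x i) (z i))

def Mmt (L : ℕ) {d : ℕ} (hd : 0 < d) (x z : Fin d → ℤ) : ℤ → ℤ :=
  Ext L hd (fun i => max (x i) (z i))

/-- two adjacent positions are linked: equal min-values, both free -/
def lnk (L : ℕ) {d : ℕ} (hd : 0 < d) (x z : Fin d → ℤ) (n : ℤ) : Prop :=
  mmt L hd x z (n+1) = mmt L hd x z n ∧
  x (res d hd n) = z (res d hd n) ∧ x (res d hd (n+1)) = z (res d hd (n+1))

/-- good pair hypothesis -/
structure Good (L : ℕ) {d : ℕ} (hd : 0 < d) (x z : Fin d → ℤ) : Prop where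
  hx : IsStair L hd x
  hz : IsStair L hd z
  hxz : ∀ i, x i = z i ∨ x i = z i + 1 ∨ z i = x i + 1

variable (hd : 0 < d) (x z : Fin d → ℤ) (hL : 0 < L)

lemma min_stair (G : Good L hd x z) : IsStair L hd (fun i => min (x i) (z i)) := by
  refine ⟨Antitone.min G.hx.1 G.hz.1, ?_⟩
  have h1 := G.hx.2; have h2 := G.hz.2
  simp only [le_min_iff, min_le_iff] at *
  omega

lemma max_stair (G : Good L hd x z) : IsStair L hd (fun i => max (x i) (z i)) := by
  refine ⟨Antitone.max G.hx.1 G.hz.1, ?_⟩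
  have h1 := G.hx.2; have h2 := G.hz.2
  simp only [max_le_iff, le_max_iff] at *
  omega

lemma mmt_dec (G : Good L hd x z) : ∀ n : ℤ, mmt L hd x z (n+1) ≤ mmt L hd x z n :=
  (isStair_iff hd _).mp (min_stair hd x z G)

lemma Mmt_dec (G : Good L hd x z) : ∀ n : ℤ, Mmt L hd x z (n+1) ≤ Mmt L hd x z n :=
  (isStair_iff hd _).mp (max_stair hd x z G)

lemma Mmt_eq_mmt (G : Good L hd x z) (n : ℤ) :
    Mmt L hd x z n = mmt L hd x z n +
      (if x (res d hd n) = z (res d hd n) then (0:ℤ) else 1) := by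
  have hpt : (fun i => max (x i) (z i)) (res d hd n) = (fun i => min (x i) (z i)) (res d hd n)
      + (if x (res d hd n) = z (res d hd n) then (0:ℤ) else 1) := by
    by_cases hk : x (res d hd n) = z (res d hd n)
    · simp [hk]
    · rcases G.hxz (res d hd n) with h|h|h
      · exact absurd h hk
      · simp only [if_neg hk]
        rw [max_eq_left (by omega), min_eq_right (by omega)]
        omega
      · simp only [if_neg hk]
        rw [max_eq_right (by omega), min_eq_left (by omega)]
        omega
  unfold Mmt mmt Ext
  rw [hpt]
  ring

lemma K_prefix (G : Good L hd x z) {n : ℤ} (he : mmt L hd x z (n+1) = mmt L hd x z n)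
    (hk : x (res d hd (n+1)) ≠ z (res d hd (n+1))) :
    x (res d hd n) ≠ z (res d hd n) := by
  have h1 := Mmt_dec hd x z G n
  rw [Mmt_eq_mmt hd x z G n, Mmt_eq_mmt hd x z G (n+1)] at h1
  intro hc
  rw [if_pos hc, if_neg hk] at h1
  omega

lemma lnk_shift (n : ℤ) (c : ℤ) : lnk L hd x z (n + (d:ℤ) * c) ↔ lnk L hd x z n := by
  unfold lnk
  have e1 : mmt L hd x z (n + (d:ℤ)*c) = mmt L hd x z n - c * L :=
    Ext_add_mul_d hd _ n c
  have e2 : mmt L hd x z (n + (d:ℤ)*c + 1) = mmt L hd x z (n+1) - c * L := by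
    have h : n + (d:ℤ)*c + 1 = (n+1) + (d:ℤ)*c := by ring
    rw [h]; exact Ext_add_mul_d hd _ (n+1) c
  have e3 : res d hd (n + (d:ℤ)*c) = res d hd n := res_eq_of_dvd hd ⟨c, by ring⟩
  have e4 : res d hd (n + (d:ℤ)*c + 1) = res d hd (n+1) := res_eq_of_dvd hd ⟨c, by ring⟩
  rw [e1, e2, e3, e4]
  constructor <;> rintro ⟨a, b, c'⟩ <;> exact ⟨by omega, b, c'⟩

include hL in
lemma exists_down (n : ℤ) : ∃ j : ℕ, ¬ lnk L hd x z (n - 1 - j) := by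
  by_contra h
  push_neg at h
  have key : ∀ j : ℕ, mmt L hd x z (n - j) = mmt L hd x z n := by
    intro j
    induction j with
    | zero => simp
    | succ j ih =>
        have h1 := (h j).1
        have e : n - 1 - (j:ℤ) + 1 = n - j := by ring
        rw [e] at h1
        have e2 : n - ((j:ℕ)+1 : ℕ) = n - 1 - (j:ℤ) := by push_cast; ring
        rw [e2, ← h1]
        exact ih
  have h2 := key d
  have h3 : mmt L hd x z ((n - (d:ℤ)) + (d:ℤ) * 1) = mmt L hd x z (n - d) - 1 * L :=
    Ext_add_mul_d hd _ _ 1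
  simp only [mul_one] at h3
  have e : (n - (d:ℤ)) + (d:ℤ) = n := by ring
  rw [e] at h3
  omega

include hL in
lemma exists_up (n : ℤ) : ∃ j : ℕ, ¬ lnk L hd x z (n + j) := by
  by_contra h
  push_neg at h
  have key : ∀ j : ℕ, mmt L hd x z (n + j) = mmt L hd x z n := by
    intro j
    induction j with
    | zero => simp
    | succ j ih =>
        have h1 := (h j).1
        have e2 : n + ((j:ℕ)+1 : ℕ) = (n + j) + 1 := by push_cast; ring
        rw [e2, h1]
        exact ih
  have h2 := key d
  have h3 : mmt L hd x z (n + (d:ℤ) * 1) = mmt L hd x z n - 1 * L :=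
    Ext_add_mul_d hd _ _ 1
  simp only [mul_one] at h3
  omega

noncomputable def pp {d L : ℕ} (hd : 0 < d) (hL : 0 < L) (x z : Fin d → ℤ) (n : ℤ) : ℕ :=
  Nat.find (exists_down hd x z hL n)

noncomputable def qq {d L : ℕ} (hd : 0 < d) (hL : 0 < L) (x z : Fin d → ℤ) (n : ℤ) : ℕ :=
  Nat.find (exists_up hd x z hL n)

noncomputable def tau {d L : ℕ} (hd : 0 < d) (hL : 0 < L) (x z : Fin d → ℤ) (n : ℤ) : ℤ :=
  n + qq hd hL x z n - pp hd hL x z n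

lemma pp_spec (n : ℤ) : ¬ lnk L hd x z (n - 1 - pp hd hL x z n) :=
  Nat.find_spec (exists_down hd x z hL n)

lemma qq_spec (n : ℤ) : ¬ lnk L hd x z (n + qq hd hL x z n) :=
  Nat.find_spec (exists_up hd x z hL n)

lemma pp_min {n : ℤ} {j : ℕ} (h : j < pp hd hL x z n) : lnk L hd x z (n - 1 - j) :=
  not_not.mp (Nat.find_min (exists_down hd x z hL n) h)

lemma qq_min {n : ℤ} {j : ℕ} (h : j < qq hd hL x z n) : lnk L hd x z (n + j) :=
  not_not.mp (Nat.find_min (exists_up hd x z hL n) h)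

lemma pp_le {n : ℤ} {m : ℕ} (h : ¬ lnk L hd x z (n - 1 - m)) : pp hd hL x z n ≤ m :=
  Nat.find_min' (exists_down hd x z hL n) h

lemma le_pp {n : ℤ} {m : ℕ} (h : ∀ j < m, lnk L hd x z (n - 1 - j)) : m ≤ pp hd hL x z n :=
  (Nat.le_find_iff (exists_down hd x z hL n) m).mpr (fun j hj => not_not.mpr (h j hj))

lemma qq_le {n : ℤ} {m : ℕ} (h : ¬ lnk L hd x z (n + m)) : qq hd hL x z n ≤ m :=
  Nat.find_min' (exists_up hd x z hL n) h

lemma le_qq {n : ℤ} {m : ℕ} (h : ∀ j < m, lnk L hd x z (n + j)) : m ≤ qq hd hL x z n :=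
  (Nat.le_find_iff (exists_up hd x z hL n) m).mpr (fun j hj => not_not.mpr (h j hj))

lemma run_lnk {n i : ℤ} (h1 : n - pp hd hL x z n ≤ i) (h2 : i < n + qq hd hL x z n) :
    lnk L hd x z i := by
  rcases le_or_gt n i with hc | hc
  · have hj : ((i - n).toNat : ℤ) = i - n := Int.toNat_of_nonneg (by omega)
    have h := qq_min hd x z hL (n := n) (j := (i-n).toNat) (by omega)
    have e : n + ((i - n).toNat : ℤ) = i := by omega
    rwa [e] at h
  · have hj : ((n - 1 - i).toNat : ℤ) = n - 1 - i := Int.toNat_of_nonneg (by omega)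
    have h := pp_min hd x z hL (n := n) (j := (n-1-i).toNat) (by omega)
    have e : n - 1 - ((n - 1 - i).toNat : ℤ) = i := by omega
    rwa [e] at h

lemma pp_shift (n : ℤ) (c : ℤ) : pp hd hL x z (n + (d:ℤ)*c) = pp hd hL x z n := by
  apply le_antisymm
  · apply pp_le hd x z hL
    have e : n + (d:ℤ)*c - 1 - (pp hd hL x z n) = (n - 1 - pp hd hL x z n) + (d:ℤ)*c := by ring
    rw [e, lnk_shift]
    exact pp_spec hd x z hL n
  · apply pp_le hd x z hL
    have e : n - 1 - (pp hd hL x z (n + (d:ℤ)*c)) =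
        (n + (d:ℤ)*c - 1 - pp hd hL x z (n + (d:ℤ)*c)) + (d:ℤ)*(-c) := by ring
    rw [e, lnk_shift]
    exact pp_spec hd x z hL _

lemma qq_shift (n : ℤ) (c : ℤ) : qq hd hL x z (n + (d:ℤ)*c) = qq hd hL x z n := by
  apply le_antisymm
  · apply qq_le hd x z hL
    have e : n + (d:ℤ)*c + (qq hd hL x z n) = (n + qq hd hL x z n) + (d:ℤ)*c := by ring
    rw [e, lnk_shift]
    exact qq_spec hd x z hL n
  · apply qq_le hd x z hL
    have e : n + (qq hd hL x z (n + (d:ℤ)*c)) =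
        (n + (d:ℤ)*c + qq hd hL x z (n + (d:ℤ)*c)) + (d:ℤ)*(-c) := by ring
    rw [e, lnk_shift]
    exact qq_spec hd x z hL _

lemma tau_shift (n : ℤ) (c : ℤ) : tau hd hL x z (n + (d:ℤ)*c) = tau hd hL x z n + (d:ℤ)*c := by
  unfold tau
  rw [pp_shift hd x z hL, qq_shift hd x z hL]
  ring

lemma qq_pos {n : ℤ} (h : lnk L hd x z n) : 0 < qq hd hL x z n := by
  rcases Nat.eq_zero_or_pos (qq hd hL x z n) with h0 | h0
  · exfalso
    have hs := qq_spec hd x z hL n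
    rw [h0] at hs
    simp only [Nat.cast_zero, add_zero] at hs
    exact hs h
  · exact h0

lemma pp_succ {n : ℤ} (h : lnk L hd x z n) : pp hd hL x z (n+1) = pp hd hL x z n + 1 := by
  apply le_antisymm
  · apply pp_le hd x z hL
    have e : n + 1 - 1 - ((pp hd hL x z n + 1 : ℕ) : ℤ) = n - 1 - pp hd hL x z n := by
      push_cast; ring
    rw [e]
    exact pp_spec hd x z hL n
  · apply le_pp hd x z hL
    intro m hm
    match m, hm with
    | 0, _ => simpa using h
    | (j+1), hm =>
        have e : n + 1 - 1 - ((j+1 : ℕ) : ℤ) = n - 1 - j := by push_cast; ring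
        rw [e]
        exact pp_min hd x z hL (by omega)

lemma qq_succ {n : ℤ} (h : lnk L hd x z n) : qq hd hL x z n = qq hd hL x z (n+1) + 1 := by
  apply le_antisymm
  · apply qq_le hd x z hL
    have e : n + ((qq hd hL x z (n+1) + 1 : ℕ) : ℤ) = (n + 1) + qq hd hL x z (n+1) := by
      push_cast; ring
    rw [e]
    exact qq_spec hd x z hL (n+1)
  · apply le_qq hd x z hL
    intro m hm
    match m, hm with
    | 0, _ => simpa using h
    | (j+1), hm =>
        have e : n + ((j+1 : ℕ) : ℤ) = (n + 1) + j := by push_cast; ring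
        rw [e]
        exact qq_min hd x z hL (by omega)

lemma pp_tau (n : ℤ) : pp hd hL x z (tau hd hL x z n) = qq hd hL x z n := by
  apply le_antisymm
  · apply pp_le hd x z hL
    have e : tau hd hL x z n - 1 - (qq hd hL x z n) = n - 1 - pp hd hL x z n := by
      unfold tau; ring
    rw [e]
    exact pp_spec hd x z hL n
  · apply le_pp hd x z hL
    intro m hm
    apply run_lnk hd x z hL (n := n)
    · unfold tau; omega
    · unfold tau; omega

lemma qq_tau (n : ℤ) : qq hd hL x z (tau hd hL x z n) = pp hd hL x z n := by
  apply le_antisymm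
  · apply qq_le hd x z hL
    have e : tau hd hL x z n + (pp hd hL x z n) = n + qq hd hL x z n := by
      unfold tau; ring
    rw [e]
    exact qq_spec hd x z hL n
  · apply le_qq hd x z hL
    intro m hm
    apply run_lnk hd x z hL (n := n)
    · unfold tau; omega
    · unfold tau; omega

lemma tau_tau (n : ℤ) : tau hd hL x z (tau hd hL x z n) = n := by
  have h1 := pp_tau hd x z hL n
  have h2 := qq_tau hd x z hL n
  unfold tau at *
  omega

lemma tau_succ {n : ℤ} (h : lnk L hd x z n) : tau hd hL x z (n+1) = tau hd hL x z n - 1 := by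
  have h1 := pp_succ hd x z hL h
  have h2 := qq_succ hd x z hL h
  unfold tau at *
  omega

end Core

section Cond

variable {d L : ℕ} (hd : 0 < d) (x z : Fin d → ℤ) (hL : 0 < L)

def ind {d : ℕ} (t : Fin d → Bool) (i : Fin d) : ℤ := if t i then 1 else 0

lemma ind_nonneg {t : Fin d → Bool} {i : Fin d} : 0 ≤ ind t i := by
  unfold ind; split <;> omega

lemma ind_le_one {t : Fin d → Bool} {i : Fin d} : ind t i ≤ 1 := by
  unfold ind; split <;> omega

def bplus (x z : Fin d → ℤ) (t : Fin d → Bool) (i : Fin d) : ℤ :=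
  min (x i) (z i) + ind t i

def bminus (x z : Fin d → ℤ) (t : Fin d → Bool) (i : Fin d) : ℤ :=
  max (x i) (z i) - ind t i

def condA (L : ℕ) {d : ℕ} (hd : 0 < d) (x z : Fin d → ℤ) (t : Fin d → Bool) : Prop :=
  ∀ n : ℤ, lnk L hd x z n → ind t (res d hd (n+1)) ≤ ind t (res d hd n)

def condB (L : ℕ) {d : ℕ} (hd : 0 < d) (x z : Fin d → ℤ) (t : Fin d → Bool) : Prop :=
  ∀ n : ℤ, lnk L hd x z n → ind t (res d hd n) ≤ ind t (res d hd (n+1))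

def tK (x z : Fin d → ℤ) (t : Fin d → Bool) : Prop :=
  ∀ i, x i ≠ z i → t i = true

noncomputable def Phi {d L : ℕ} (hd : 0 < d) (hL : 0 < L) (x z : Fin d → ℤ)
    (t : Fin d → Bool) (i : Fin d) : Bool :=
  if x i = z i then t (res d hd (tau hd hL x z (i : ℤ))) else true

lemma Ext_bplus (t : Fin d → Bool) (n : ℤ) :
    Ext L hd (bplus x z t) n = mmt L hd x z n + ind t (res d hd n) := by
  unfold Ext bplus mmt Ext
  ring

lemma Ext_bminus (t : Fin d → Bool) (n : ℤ) :
    Ext L hd (bminus x z t) n = Mmt L hd x z n - ind t (res d hd n) := by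
  unfold Ext bminus Mmt Ext
  ring

lemma stairA_iff (G : Good L hd x z) {t : Fin d → Bool} (ht : tK x z t) :
    IsStair L hd (bplus x z t) ↔ condA L hd x z t := by
  rw [isStair_iff]
  constructor
  · intro H n hlnk
    have h := H n
    rw [Ext_bplus, Ext_bplus] at h
    have := hlnk.1
    omega
  · intro H n
    rw [Ext_bplus, Ext_bplus]
    have hdec := mmt_dec hd x z G n
    rcases lt_or_eq_of_le hdec with hlt | heq
    · have h1 : ind t (res d hd (n+1)) ≤ 1 := ind_le_one
      have h2 : 0 ≤ ind t (res d hd n) := ind_nonneg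
      omega
    · by_cases hK1 : x (res d hd n) = z (res d hd n)
      · by_cases hK2 : x (res d hd (n+1)) = z (res d hd (n+1))
        · have := H n ⟨heq, hK1, hK2⟩
          omega
        · exact absurd (K_prefix hd x z G heq hK2) (by simp [hK1])
      · have h1 : ind t (res d hd n) = 1 := by
          unfold ind; rw [if_pos (ht _ hK1)]
        have h2 : ind t (res d hd (n+1)) ≤ 1 := ind_le_one
        omega

lemma stairB_iff (G : Good L hd x z) {t : Fin d → Bool} (ht : tK x z t) :
    IsStair L hd (bminus x z t) ↔ condB L hd x z t := by
  rw [isStair_iff]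
  constructor
  · intro H n hlnk
    have h := H n
    rw [Ext_bminus, Ext_bminus] at h
    have hM1 := Mmt_eq_mmt hd x z G n
    have hM2 := Mmt_eq_mmt hd x z G (n+1)
    rw [if_pos hlnk.2.1] at hM1
    rw [if_pos hlnk.2.2] at hM2
    have := hlnk.1
    omega
  · intro H n
    rw [Ext_bminus, Ext_bminus]
    have hdec := Mmt_dec hd x z G n
    rcases lt_or_eq_of_le hdec with hlt | heq
    · have h1 : ind t (res d hd n) ≤ 1 := ind_le_one
      have h2 : 0 ≤ ind t (res d hd (n+1)) := ind_nonneg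
      omega
    · have hM1 := Mmt_eq_mmt hd x z G n
      have hM2 := Mmt_eq_mmt hd x z G (n+1)
      have hm := mmt_dec hd x z G n
      by_cases hK1 : x (res d hd n) = z (res d hd n)
      · by_cases hK2 : x (res d hd (n+1)) = z (res d hd (n+1))
        · rw [if_pos hK1] at hM1
          rw [if_pos hK2] at hM2
          have hlnk : lnk L hd x z n := ⟨by omega, hK1, hK2⟩
          have := H n hlnk
          omega
        · have h2 : ind t (res d hd (n+1)) = 1 := by
            unfold ind; rw [if_pos (ht _ hK2)]
          have h1 : ind t (res d hd n) ≤ 1 := ind_le_one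
          omega
      · by_cases hK2 : x (res d hd (n+1)) = z (res d hd (n+1))
        · rw [if_neg hK1] at hM1
          rw [if_pos hK2] at hM2
          omega
        · have h1 : ind t (res d hd n) = 1 := by
            unfold ind; rw [if_pos (ht _ hK1)]
          have h2 : ind t (res d hd (n+1)) = 1 := by
            unfold ind; rw [if_pos (ht _ hK2)]
          omega

/-- `res (tau (res n)) = res (tau n)` -/
lemma res_tau_res (n : ℤ) :
    res d hd (tau hd hL x z ((res d hd n : ℕ) : ℤ)) = res d hd (tau hd hL x z n) := by
  have hres : res d hd ((res d hd n : ℕ) : ℤ) = res d hd n := res_coe hd _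
  obtain ⟨c, hc⟩ := dvd_of_res_eq hd hres
  have he : ((res d hd n : ℕ) : ℤ) = n + (d:ℤ) * c := by omega
  rw [he, tau_shift hd x z hL]
  exact res_eq_of_dvd hd ⟨c, by ring⟩

lemma Phi_apply_F {t : Fin d → Bool} {i : Fin d} (hF : x i = z i) :
    Phi hd hL x z t i = t (res d hd (tau hd hL x z (i : ℤ))) := by
  unfold Phi
  rw [if_pos hF]

/-- freeness is preserved by τ -/
lemma tau_free {i : Fin d} (hF : x i = z i) :
    x (res d hd (tau hd hL x z (i:ℤ))) = z (res d hd (tau hd hL x z (i:ℤ))) := by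
  set n : ℤ := (i : ℤ) with hn
  by_cases htau : tau hd hL x z n = n
  · rw [htau, res_coe hd i]
    exact hF
  · have hle : tau hd hL x z n ≤ n + qq hd hL x z n := by unfold tau; omega
    rcases lt_or_eq_of_le hle with hlt | heqq
    · have hl : lnk L hd x z (tau hd hL x z n) := by
        apply run_lnk hd x z hL (n := n)
        · unfold tau; omega
        · exact hlt
      exact hl.2.1
    · have hpp0 : pp hd hL x z n = 0 := by unfold tau at heqq; omega
      have hqq1 : 0 < qq hd hL x z n := by
        rcases Nat.eq_zero_or_pos (qq hd hL x z n) with h0 | h0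
        · exfalso; apply htau; unfold tau; omega
        · exact h0
      have hl : lnk L hd x z (n + qq hd hL x z n - 1) := by
        apply run_lnk hd x z hL (n := n)
        · omega
        · omega
      have := hl.2.2
      have e : n + (qq hd hL x z n : ℤ) - 1 + 1 = tau hd hL x z n := by unfold tau; omega
      rwa [e] at this

/-- τ-hat is an involution on free residues -/
lemma tauhat_invol {i : Fin d} (hF : x i = z i) :
    res d hd (tau hd hL x z ((res d hd (tau hd hL x z (i:ℤ)) : ℕ) : ℤ)) = i := by
  rw [res_tau_res hd x z hL]
  rw [tau_tau hd x z hL]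
  exact res_coe hd i

lemma Phi_tK (t : Fin d → Bool) : tK x z (Phi hd hL x z t) := by
  intro i hK
  unfold Phi
  rw [if_neg hK]

lemma Phi_invol {t : Fin d → Bool} (ht : tK x z t) :
    Phi hd hL x z (Phi hd hL x z t) = t := by
  funext i
  by_cases hF : x i = z i
  · rw [Phi_apply_F hd x z hL hF]
    rw [Phi_apply_F hd x z hL (tau_free hd x z hL hF)]
    rw [tauhat_invol hd x z hL hF]
  · unfold Phi
    rw [if_neg hF, (ht i hF)]

lemma condA_Phi {t : Fin d → Bool} (H : condA L hd x z t) :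
    condB L hd x z (Phi hd hL x z t) := by
  intro n hlnk
  have e1 : ind (Phi hd hL x z t) (res d hd n) = ind t (res d hd (tau hd hL x z n)) := by
    unfold ind
    rw [Phi_apply_F hd x z hL hlnk.2.1, res_tau_res hd x z hL]
  have e2 : ind (Phi hd hL x z t) (res d hd (n+1)) =
      ind t (res d hd (tau hd hL x z n - 1)) := by
    unfold ind
    rw [Phi_apply_F hd x z hL hlnk.2.2, res_tau_res hd x z hL, tau_succ hd x z hL hlnk]
  rw [e1, e2]
  have hql : 0 < qq hd hL x z n := qq_pos hd x z hL hlnk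
  have hl2 : lnk L hd x z (tau hd hL x z n - 1) := by
    apply run_lnk hd x z hL (n := n)
    · unfold tau; omega
    · unfold tau; omega
  have := H _ hl2
  have e3 : tau hd hL x z n - 1 + 1 = tau hd hL x z n := by ring
  rwa [e3] at this

lemma condB_Phi {t : Fin d → Bool} (H : condB L hd x z t) :
    condA L hd x z (Phi hd hL x z t) := by
  intro n hlnk
  have e1 : ind (Phi hd hL x z t) (res d hd n) = ind t (res d hd (tau hd hL x z n)) := by
    unfold ind
    rw [Phi_apply_F hd x z hL hlnk.2.1, res_tau_res hd x z hL]
  have e2 : ind (Phi hd hL x z t) (res d hd (n+1)) =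
      ind t (res d hd (tau hd hL x z n - 1)) := by
    unfold ind
    rw [Phi_apply_F hd x z hL hlnk.2.2, res_tau_res hd x z hL, tau_succ hd x z hL hlnk]
  rw [e1, e2]
  have hql : 0 < qq hd hL x z n := qq_pos hd x z hL hlnk
  have hl2 : lnk L hd x z (tau hd hL x z n - 1) := by
    apply run_lnk hd x z hL (n := n)
    · unfold tau; omega
    · unfold tau; omega
  have := H _ hl2
  have e3 : tau hd hL x z n - 1 + 1 = tau hd hL x z n := by ring
  rwa [e3] at this

lemma sum_ind_Phi {t : Fin d → Bool} (ht : tK x z t) :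
    ∑ i, ind (Phi hd hL x z t) i = ∑ i, ind t i := by
  have e1 : ∀ i : Fin d, ind (Phi hd hL x z t) i =
      if x i = z i then ind t (res d hd (tau hd hL x z (i:ℤ))) else 1 := by
    intro i
    unfold ind Phi
    by_cases hF : x i = z i <;> simp [hF]
  have e2 : ∀ i : Fin d, ind t i = if x i = z i then ind t i else 1 := by
    intro i
    by_cases hF : x i = z i
    · rw [if_pos hF]
    · rw [if_neg hF]
      unfold ind
      rw [if_pos (ht i hF)]
  rw [Finset.sum_congr rfl (fun i _ => e1 i), Finset.sum_congr rfl (fun i _ => e2 i)]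
  rw [Finset.sum_ite, Finset.sum_ite]
  congr 1
  refine Finset.sum_nbij' (fun a => res d hd (tau hd hL x z (a:ℤ)))
    (fun a => res d hd (tau hd hL x z (a:ℤ))) ?_ ?_ ?_ ?_ ?_
  · intro a ha
    simp only [Finset.mem_filter, Finset.mem_univ, true_and] at ha ⊢
    exact tau_free hd x z hL ha
  · intro a ha
    simp only [Finset.mem_filter, Finset.mem_univ, true_and] at ha ⊢
    exact tau_free hd x z hL ha
  · intro a ha
    simp only [Finset.mem_filter, Finset.mem_univ, true_and] at ha
    exact tauhat_invol hd x z hL ha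
  · intro a ha
    simp only [Finset.mem_filter, Finset.mem_univ, true_and] at ha
    exact tauhat_invol hd x z hL ha
  · intro a ha
    rfl

end Cond

section Assemble

variable {d L : ℕ} (hd : 0 < d) (x z : Fin d → ℤ) (hL : 0 < L)

lemma stair_of_co_left {α β : Fin d → ℤ} (h : CoCylInterlace d L α β) : IsStair L hd α :=
  ⟨h.1, (h.2.2.1 hd).1⟩

lemma stair_of_co_right {α β : Fin d → ℤ} (h : CoCylInterlace d L α β) : IsStair L hd β :=
  ⟨h.2.1, (h.2.2.1 hd).2⟩

lemma co_of {α β : Fin d → ℤ} (ha : IsStair L hd α) (hb : IsStair L hd β)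
    (hdiff : ∀ i, β i = α i ∨ β i = α i + 1) : CoCylInterlace d L α β :=
  ⟨ha.1, hb.1, fun _ => ⟨ha.2, hb.2⟩, hdiff⟩

lemma tdec_tK (G : Good L hd x z) {β : Fin d → ℤ}
    (h1 : ∀ i, β i = x i ∨ β i = x i + 1) (h2 : ∀ i, β i = z i ∨ β i = z i + 1) :
    tK x z (fun i => decide (β i = min (x i) (z i) + 1)) := by
  intro i hK
  rw [decide_eq_true_iff]
  rcases le_total (x i) (z i) with hle|hle
  · rw [min_eq_left hle]
    rcases G.hxz i with e|e|e <;> rcases h1 i with e1|e1 <;> rcases h2 i with e2|e2 <;> omega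
  · rw [min_eq_right hle]
    rcases G.hxz i with e|e|e <;> rcases h1 i with e1|e1 <;> rcases h2 i with e2|e2 <;> omega

lemma tdec_tK' (G : Good L hd x z) {δ : Fin d → ℤ}
    (h1 : ∀ i, x i = δ i ∨ x i = δ i + 1) (h2 : ∀ i, z i = δ i ∨ z i = δ i + 1) :
    tK x z (fun i => decide (δ i = max (x i) (z i) - 1)) := by
  intro i hK
  rw [decide_eq_true_iff]
  rcases le_total (x i) (z i) with hle|hle
  · rw [max_eq_right hle]
    rcases G.hxz i with e|e|e <;> rcases h1 i with e1|e1 <;> rcases h2 i with e2|e2 <;> omega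
  · rw [max_eq_left hle]
    rcases G.hxz i with e|e|e <;> rcases h1 i with e1|e1 <;> rcases h2 i with e2|e2 <;> omega

lemma bplus_decide {β : Fin d → ℤ}
    (hr : ∀ i, β i = min (x i) (z i) ∨ β i = min (x i) (z i) + 1) :
    bplus x z (fun i => decide (β i = min (x i) (z i) + 1)) = β := by
  funext i
  have hr' := hr i
  unfold bplus ind
  split <;> rename_i hc
  · have hc' : β i = min (x i) (z i) + 1 := by simpa using hc
    omega
  · have hc' : ¬ (β i = min (x i) (z i) + 1) := by simpa using hc
    omega

lemma bminus_decide {δ : Fin d → ℤ}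
    (hr : ∀ i, δ i = max (x i) (z i) - 1 ∨ δ i = max (x i) (z i)) :
    bminus x z (fun i => decide (δ i = max (x i) (z i) - 1)) = δ := by
  funext i
  have hr' := hr i
  unfold bminus ind
  split <;> rename_i hc
  · have hc' : δ i = max (x i) (z i) - 1 := by simpa using hc
    omega
  · have hc' : ¬ (δ i = max (x i) (z i) - 1) := by simpa using hc
    omega

lemma bplus_decide_inv (t : Fin d → Bool) :
    (fun i => decide (bplus x z t i = min (x i) (z i) + 1)) = t := by
  funext i
  cases h : t i
  · have hb : bplus x z t i = min (x i) (z i) := by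
      unfold bplus ind; rw [h]; simp
    rw [hb]
    simp only [decide_eq_false_iff_not]
    omega
  · have hb : bplus x z t i = min (x i) (z i) + 1 := by
      unfold bplus ind; rw [h]; simp
    rw [hb]
    simp

lemma bminus_decide_inv (t : Fin d → Bool) :
    (fun i => decide (bminus x z t i = max (x i) (z i) - 1)) = t := by
  funext i
  cases h : t i
  · have hb : bminus x z t i = max (x i) (z i) := by
      unfold bminus ind; rw [h]; simp
    rw [hb]
    simp only [decide_eq_false_iff_not]
    omega
  · have hb : bminus x z t i = max (x i) (z i) - 1 := by
      unfold bminus ind; rw [h]; simp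
    rw [hb]
    simp

lemma beta_range (G : Good L hd x z) {β : Fin d → ℤ}
    (h1 : ∀ i, β i = x i ∨ β i = x i + 1) (h2 : ∀ i, β i = z i ∨ β i = z i + 1) (i : Fin d) :
    β i = min (x i) (z i) ∨ β i = min (x i) (z i) + 1 := by
  rcases le_total (x i) (z i) with hle|hle
  · rw [min_eq_left hle]
    rcases h1 i with e|e <;> rcases h2 i with e'|e' <;> omega
  · rw [min_eq_right hle]
    rcases h1 i with e|e <;> rcases h2 i with e'|e' <;> omega

lemma delta_range (G : Good L hd x z) {δ : Fin d → ℤ}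
    (h1 : ∀ i, x i = δ i ∨ x i = δ i + 1) (h2 : ∀ i, z i = δ i ∨ z i = δ i + 1) (i : Fin d) :
    δ i = max (x i) (z i) - 1 ∨ δ i = max (x i) (z i) := by
  rcases le_total (x i) (z i) with hle|hle
  · rw [max_eq_right hle]
    rcases h1 i with e|e <;> rcases h2 i with e'|e' <;> omega
  · rw [max_eq_left hle]
    rcases h1 i with e|e <;> rcases h2 i with e'|e' <;> omega

lemma bplus_diff_x (G : Good L hd x z) {t : Fin d → Bool} (ht : tK x z t) (i : Fin d) :
    bplus x z t i = x i ∨ bplus x z t i = x i + 1 := by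
  unfold bplus ind
  by_cases hK : x i = z i
  · rcases le_total (x i) (z i) with hle|hle
    · rw [min_eq_left hle]; split <;> omega
    · rw [min_eq_right hle]; split <;> omega
  · rw [if_pos (ht i hK)]
    rcases G.hxz i with e|e|e
    · exact absurd e hK
    · rw [min_eq_right (by omega)]; omega
    · rw [min_eq_left (by omega)]; omega

lemma bplus_diff_z (G : Good L hd x z) {t : Fin d → Bool} (ht : tK x z t) (i : Fin d) :
    bplus x z t i = z i ∨ bplus x z t i = z i + 1 := by
  unfold bplus ind
  by_cases hK : x i = z i
  · rcases le_total (x i) (z i) with hle|hle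
    · rw [min_eq_left hle]; split <;> omega
    · rw [min_eq_right hle]; split <;> omega
  · rw [if_pos (ht i hK)]
    rcases G.hxz i with e|e|e
    · exact absurd e hK
    · rw [min_eq_right (by omega)]; omega
    · rw [min_eq_left (by omega)]; omega

lemma bminus_diff_x (G : Good L hd x z) {t : Fin d → Bool} (ht : tK x z t) (i : Fin d) :
    x i = bminus x z t i ∨ x i = bminus x z t i + 1 := by
  unfold bminus ind
  by_cases hK : x i = z i
  · rcases le_total (x i) (z i) with hle|hle
    · rw [max_eq_right hle]; split <;> omega
    · rw [max_eq_left hle]; split <;> omega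
  · rw [if_pos (ht i hK)]
    rcases G.hxz i with e|e|e
    · exact absurd e hK
    · rw [max_eq_left (by omega)]; omega
    · rw [max_eq_right (by omega)]; omega

lemma bminus_diff_z (G : Good L hd x z) {t : Fin d → Bool} (ht : tK x z t) (i : Fin d) :
    z i = bminus x z t i ∨ z i = bminus x z t i + 1 := by
  unfold bminus ind
  by_cases hK : x i = z i
  · rcases le_total (x i) (z i) with hle|hle
    · rw [max_eq_right hle]; split <;> omega
    · rw [max_eq_left hle]; split <;> omega
  · rw [if_pos (ht i hK)]
    rcases G.hxz i with e|e|e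
    · exact absurd e hK
    · rw [max_eq_left (by omega)]; omega
    · rw [max_eq_right (by omega)]; omega

lemma sum_bplus (t : Fin d → Bool) :
    ∑ i, bplus x z t i = (∑ i, min (x i) (z i)) + ∑ i, ind t i := by
  unfold bplus
  rw [Finset.sum_add_distrib]

lemma sum_bminus (t : Fin d → Bool) :
    ∑ i, bminus x z t i = (∑ i, max (x i) (z i)) - ∑ i, ind t i := by
  unfold bminus
  rw [Finset.sum_sub_distrib]

lemma sum_min_max :
    (∑ i, min (x i) (z i)) + (∑ i, max (x i) (z i)) = (∑ i, x i) + (∑ i, z i) := by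
  rw [← Finset.sum_add_distrib, ← Finset.sum_add_distrib]
  apply Finset.sum_congr rfl
  intro i _
  rcases le_total (x i) (z i) with h|h
  · rw [min_eq_left h, max_eq_right h]
  · rw [min_eq_right h, max_eq_left h]; omega

/-- forward map of the core bijection -/
noncomputable def coreMap {d L : ℕ} (hd : 0 < d) (hL : 0 < L) (x z : Fin d → ℤ)
    (β : Fin d → ℤ) : Fin d → ℤ :=
  bminus x z (Phi hd hL x z (fun i => decide (β i = min (x i) (z i) + 1)))

/-- backward map of the core bijection -/
noncomputable def coreInv {d L : ℕ} (hd : 0 < d) (hL : 0 < L) (x z : Fin d → ℤ)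
    (δ : Fin d → ℤ) : Fin d → ℤ :=
  bplus x z (Phi hd hL x z (fun i => decide (δ i = max (x i) (z i) - 1)))

lemma coreMap_mem (G : Good L hd x z) {s : ℤ} {β : Fin d → ℤ}
    (hβ : CoCylInterlace d L x β ∧ CoCylInterlace d L z β ∧ ∑ i, β i = s) :
    CoCylInterlace d L (coreMap hd hL x z β) x ∧ CoCylInterlace d L (coreMap hd hL x z β) z ∧
      ∑ i, coreMap hd hL x z β i = (∑ i, x i) + (∑ i, z i) - s := by
  obtain ⟨hco1, hco2, hsum⟩ := hβ
  have h1 := hco1.2.2.2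
  have h2 := hco2.2.2.2
  set t : Fin d → Bool := fun i => decide (β i = min (x i) (z i) + 1) with htdef
  have hbp : bplus x z t = β := bplus_decide x z (beta_range hd x z G h1 h2)
  have htK : tK x z t := tdec_tK hd x z G h1 h2
  have hstairβ : IsStair L hd (bplus x z t) := by
    rw [hbp]; exact stair_of_co_right hd hco1
  have hA : condA L hd x z t := (stairA_iff hd x z G htK).mp hstairβ
  have hB : condB L hd x z (Phi hd hL x z t) := condA_Phi hd x z hL hA
  have hstairδ : IsStair L hd (bminus x z (Phi hd hL x z t)) :=
    (stairB_iff hd x z G (Phi_tK hd x z hL t)).mpr hB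
  refine ⟨co_of hd hstairδ G.hx (bminus_diff_x hd x z G (Phi_tK hd x z hL t)),
    co_of hd hstairδ G.hz (bminus_diff_z hd x z G (Phi_tK hd x z hL t)), ?_⟩
  show ∑ i, bminus x z (Phi hd hL x z t) i = _
  rw [sum_bminus, sum_ind_Phi hd x z hL htK]
  have e1 : ∑ i, bplus x z t i = s := by rw [hbp]; exact hsum
  rw [sum_bplus] at e1
  have e2 := sum_min_max x z
  omega

lemma coreInv_mem (G : Good L hd x z) {S : ℤ} {δ : Fin d → ℤ}
    (hδ : CoCylInterlace d L δ x ∧ CoCylInterlace d L δ z ∧ ∑ i, δ i = S) :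
    CoCylInterlace d L x (coreInv hd hL x z δ) ∧ CoCylInterlace d L z (coreInv hd hL x z δ) ∧
      ∑ i, coreInv hd hL x z δ i = (∑ i, x i) + (∑ i, z i) - S := by
  obtain ⟨hco1, hco2, hsum⟩ := hδ
  have h1 := hco1.2.2.2
  have h2 := hco2.2.2.2
  set t : Fin d → Bool := fun i => decide (δ i = max (x i) (z i) - 1) with htdef
  have hbm : bminus x z t = δ := bminus_decide x z (delta_range hd x z G h1 h2)
  have htK : tK x z t := tdec_tK' hd x z G h1 h2
  have hstairδ : IsStair L hd (bminus x z t) := by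
    rw [hbm]; exact stair_of_co_left hd hco1
  have hB : condB L hd x z t := (stairB_iff hd x z G htK).mp hstairδ
  have hA : condA L hd x z (Phi hd hL x z t) := condB_Phi hd x z hL hB
  have hstairβ : IsStair L hd (bplus x z (Phi hd hL x z t)) :=
    (stairA_iff hd x z G (Phi_tK hd x z hL t)).mpr hA
  refine ⟨co_of hd G.hx hstairβ (bplus_diff_x hd x z G (Phi_tK hd x z hL t)),
    co_of hd G.hz hstairβ (bplus_diff_z hd x z G (Phi_tK hd x z hL t)), ?_⟩
  show ∑ i, bplus x z (Phi hd hL x z t) i = _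
  rw [sum_bplus, sum_ind_Phi hd x z hL htK]
  have e1 : ∑ i, bminus x z t i = S := by rw [hbm]; exact hsum
  rw [sum_bminus] at e1
  have e2 := sum_min_max x z
  omega

lemma coreInv_coreMap (G : Good L hd x z) {β : Fin d → ℤ}
    (h1 : ∀ i, β i = x i ∨ β i = x i + 1) (h2 : ∀ i, β i = z i ∨ β i = z i + 1) :
    coreInv hd hL x z (coreMap hd hL x z β) = β := by
  unfold coreInv coreMap
  rw [bminus_decide_inv]
  rw [Phi_invol hd x z hL (tdec_tK hd x z G h1 h2)]
  exact bplus_decide x z (beta_range hd x z G h1 h2)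

lemma coreMap_coreInv (G : Good L hd x z) {δ : Fin d → ℤ}
    (h1 : ∀ i, x i = δ i ∨ x i = δ i + 1) (h2 : ∀ i, z i = δ i ∨ z i = δ i + 1) :
    coreMap hd hL x z (coreInv hd hL x z δ) = δ := by
  unfold coreInv coreMap
  rw [bplus_decide_inv]
  rw [Phi_invol hd x z hL (tdec_tK' hd x z G h1 h2)]
  exact bminus_decide x z (delta_range hd x z G h1 h2)

include hL in
theorem core_good (G : Good L hd x z) (s : ℤ) :
    Nat.card {β : Fin d → ℤ //
        CoCylInterlace d L x β ∧ CoCylInterlace d L z β ∧ ∑ i, β i = s} =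
    Nat.card {δ : Fin d → ℤ //
        CoCylInterlace d L δ x ∧ CoCylInterlace d L δ z ∧
          ∑ i, δ i = (∑ i, x i) + (∑ i, z i) - s} := by
  apply Nat.card_congr
  refine Equiv.mk
    (fun β => ⟨coreMap hd hL x z β.1, coreMap_mem hd x z hL G β.2⟩)
    (fun δ => ⟨coreInv hd hL x z δ.1, ?_, ?_, ?_⟩)
    ?_ ?_
  · exact (coreInv_mem hd x z hL G δ.2).1
  · exact (coreInv_mem hd x z hL G δ.2).2.1
  · have h := (coreInv_mem hd x z hL G δ.2).2.2
    rw [h]; omega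
  · intro β
    apply Subtype.ext
    exact coreInv_coreMap hd x z hL G β.2.1.2.2.2 β.2.2.1.2.2.2
  · intro δ
    apply Subtype.ext
    exact coreMap_coreInv hd x z hL G δ.2.1.2.2.2 δ.2.2.1.2.2.2

end Assemble

end SkewRS

namespace SkewRS

section Wrapper

variable {d L : ℕ}

theorem core_all (hd : 0 < d) (hL : 0 < L) (x z : Fin d → ℤ) (s : ℤ) :
    Nat.card {β : Fin d → ℤ //
        CoCylInterlace d L x β ∧ CoCylInterlace d L z β ∧ ∑ i, β i = s} =
    Nat.card {δ : Fin d → ℤ //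
        CoCylInterlace d L δ x ∧ CoCylInterlace d L δ z ∧
          ∑ i, δ i = (∑ i, x i) + (∑ i, z i) - s} := by
  by_cases hGx : IsStair L hd x
  · by_cases hGz : IsStair L hd z
    · by_cases hxz : ∀ i, x i = z i ∨ x i = z i + 1 ∨ z i = x i + 1
      · exact core_good hd x z hL ⟨hGx, hGz, hxz⟩ s
      · push_neg at hxz
        obtain ⟨i, h1, h2, h3⟩ := hxz
        haveI e1 : IsEmpty {β : Fin d → ℤ //
            CoCylInterlace d L x β ∧ CoCylInterlace d L z β ∧ ∑ i, β i = s} := by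
          constructor
          rintro ⟨β, hb1, hb2, hb3⟩
          have d1 := hb1.2.2.2 i
          have d2 := hb2.2.2.2 i
          omega
        haveI e2 : IsEmpty {δ : Fin d → ℤ //
            CoCylInterlace d L δ x ∧ CoCylInterlace d L δ z ∧
              ∑ i, δ i = (∑ i, x i) + (∑ i, z i) - s} := by
          constructor
          rintro ⟨δ, hb1, hb2, hb3⟩
          have d1 := hb1.2.2.2 i
          have d2 := hb2.2.2.2 i
          omega
        rw [Nat.card_of_isEmpty, Nat.card_of_isEmpty]
    · haveI e1 : IsEmpty {β : Fin d → ℤ //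
          CoCylInterlace d L x β ∧ CoCylInterlace d L z β ∧ ∑ i, β i = s} := by
        constructor
        rintro ⟨β, hb1, hb2, hb3⟩
        exact hGz (stair_of_co_left hd hb2)
      haveI e2 : IsEmpty {δ : Fin d → ℤ //
          CoCylInterlace d L δ x ∧ CoCylInterlace d L δ z ∧
            ∑ i, δ i = (∑ i, x i) + (∑ i, z i) - s} := by
        constructor
        rintro ⟨δ, hb1, hb2, hb3⟩
        exact hGz (stair_of_co_right hd hb2)
      rw [Nat.card_of_isEmpty, Nat.card_of_isEmpty]
  · haveI e1 : IsEmpty {β : Fin d → ℤ //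
        CoCylInterlace d L x β ∧ CoCylInterlace d L z β ∧ ∑ i, β i = s} := by
      constructor
      rintro ⟨β, hb1, hb2, hb3⟩
      exact hGx (stair_of_co_left hd hb1)
    haveI e2 : IsEmpty {δ : Fin d → ℤ //
        CoCylInterlace d L δ x ∧ CoCylInterlace d L δ z ∧
          ∑ i, δ i = (∑ i, x i) + (∑ i, z i) - s} := by
      constructor
      rintro ⟨δ, hb1, hb2, hb3⟩
      exact hGx (stair_of_co_right hd hb1)
    rw [Nat.card_of_isEmpty, Nat.card_of_isEmpty]

lemma finite_beta (x z : Fin d → ℤ) (s : ℤ) :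
    Finite {β : Fin d → ℤ //
      CoCylInterlace d L x β ∧ CoCylInterlace d L z β ∧ ∑ i, β i = s} := by
  apply Finite.of_injective (β := Fin d → Bool)
    (f := fun β => fun i => decide (β.1 i = x i + 1))
  intro a b hab
  apply Subtype.ext; funext i
  have ha := a.2.1.2.2.2 i
  have hb := b.2.1.2.2.2 i
  have hiff : (a.1 i = x i + 1) ↔ (b.1 i = x i + 1) := by
    have := congrFun hab i
    simpa [decide_eq_decide] using this
  rcases ha with h|h <;> rcases hb with h'|h'
  · omega
  · exfalso; have := hiff.mpr h'; omega
  · exfalso; have := hiff.mp h; omega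
  · omega

lemma finite_delta (x z : Fin d → ℤ) (S : ℤ) :
    Finite {δ : Fin d → ℤ //
      CoCylInterlace d L δ x ∧ CoCylInterlace d L δ z ∧ ∑ i, δ i = S} := by
  apply Finite.of_injective (β := Fin d → Bool)
    (f := fun δ => fun i => decide (δ.1 i = x i))
  intro a b hab
  apply Subtype.ext; funext i
  have ha := a.2.1.2.2.2 i
  have hb := b.2.1.2.2.2 i
  have hiff : (a.1 i = x i) ↔ (b.1 i = x i) := by
    have := congrFun hab i
    simpa [decide_eq_decide] using this
  rcases ha with h|h <;> rcases hb with h'|h'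
  · omega
  · exfalso; have := hiff.mp (by omega); omega
  · exfalso; have := hiff.mpr (by omega); omega
  · omega

/-- a chosen bijection between up-interlacing and down-interlacing middle shapes -/
noncomputable def locEquiv (hd : 0 < d) (hL : 0 < L) (x z : Fin d → ℤ) (s : ℤ) :
    {β : Fin d → ℤ //
        CoCylInterlace d L x β ∧ CoCylInterlace d L z β ∧ ∑ i, β i = s} ≃
    {δ : Fin d → ℤ //
        CoCylInterlace d L δ x ∧ CoCylInterlace d L δ z ∧
          ∑ i, δ i = (∑ i, x i) + (∑ i, z i) - s} := by
  haveI := finite_beta (L := L) x z s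
  haveI := finite_delta (L := L) x z ((∑ i, x i) + (∑ i, z i) - s)
  exact (Finite.card_eq.mp (core_all hd hL x z s)).some

end Wrapper

end SkewRS

namespace SkewRS

section Tab

variable {d L k p q : ℕ}

/-- the set of tableaux being counted -/
def Tab (L : ℕ) {d k p q : ℕ} (w : Fin k → Bool)
    (hwp : (Finset.univ.filter fun i : Fin k => w i = true).card = p)
    (hwq : (Finset.univ.filter fun i : Fin k => w i = false).card = q)
    (μ lam : Fin d → ℤ) (a : Fin p → ℕ) (b : Fin q → ℕ) : Type :=
  {T : Fin (k + 1) → Fin d → ℤ //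
    IsSkewRowStrictOsc d L k w μ lam T ∧ HasWtPlus d k p w hwp T a ∧
    HasWtMinus d k q w hwq T b}

lemma step_diff {w : Fin k → Bool} {μ lam : Fin d → ℤ} {T : Fin (k+1) → Fin d → ℤ}
    (hT : IsSkewRowStrictOsc d L k w μ lam T) (i : Fin k) (l : Fin d) :
    T i.succ l - T i.castSucc l ≤ 1 ∧ T i.castSucc l - T i.succ l ≤ 1 := by
  have h := hT.2.2 i
  by_cases hw : w i = true
  · rw [if_pos hw] at h
    have := h.2.2.2 l
    omega
  · rw [if_neg hw] at h
    have := h.2.2.2 l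
    omega

lemma tab_bound {w : Fin k → Bool} {μ lam : Fin d → ℤ} {T : Fin (k+1) → Fin d → ℤ}
    (hT : IsSkewRowStrictOsc d L k w μ lam T) :
    ∀ (i : Fin (k+1)) (l : Fin d), T i l - μ l ≤ (i : ℤ) ∧ μ l - T i l ≤ (i : ℤ) := by
  intro i
  induction i using Fin.induction with
  | zero => intro l; rw [hT.1]; simp
  | succ i ih =>
      intro l
      have h1 := ih l
      have h2 := step_diff hT i l
      have e : ((i.succ : Fin (k+1)) : ℤ) = (i.castSucc : ℤ) + 1 := by
        simp [Fin.val_succ, Fin.coe_castSucc]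
      rw [e]
      omega

instance tab_finite (w : Fin k → Bool) (hwp) (hwq) (μ lam : Fin d → ℤ)
    (a : Fin p → ℕ) (b : Fin q → ℕ) : Finite (Tab L w hwp hwq μ lam a b) := by
  haveI : Finite (Set.Icc (-(k:ℤ)) (k:ℤ)) := (Set.finite_Icc _ _).to_subtype
  apply Finite.of_injective
    (β := Fin (k+1) → Fin d → (Set.Icc (-(k:ℤ)) (k:ℤ)))
    (f := fun T => fun i l => ⟨T.1 i l - μ l, by
      have h := tab_bound T.2.1 i l
      have : (i : ℤ) ≤ k := by exact_mod_cast Nat.le_of_lt_succ i.2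
      simp only [Set.mem_Icc]
      omega⟩)
  intro T1 T2 h
  apply Subtype.ext
  funext i l
  have := congrFun (congrFun h i) l
  have h2 := congrArg Subtype.val this
  simp only [] at h2
  omega

end Tab

section SwapEmb

variable {k : ℕ}

/-- strict monotonicity of an adjacent swap on sets avoiding one of the two points -/
lemma swap_lt {j : ℕ} (hj : j + 1 < k) {S : Finset (Fin k)}
    (hS : (⟨j, by omega⟩ : Fin k) ∉ S ∨ (⟨j+1, hj⟩ : Fin k) ∉ S)
    {P Q : Fin k} (hP : P ∈ S) (hQ : Q ∈ S) (hPQ : P < Q) :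
    Equiv.swap (⟨j, by omega⟩ : Fin k) ⟨j+1, hj⟩ P <
    Equiv.swap (⟨j, by omega⟩ : Fin k) ⟨j+1, hj⟩ Q := by
  set J : Fin k := ⟨j, by omega⟩ with hJdef
  set J' : Fin k := ⟨j+1, hj⟩ with hJ'def
  have key : ∀ R : Fin k,
      ((Equiv.swap J J' R : Fin k) : ℕ) =
        if R = J then j+1 else if R = J' then j else (R : ℕ) := by
    intro R
    by_cases h1 : R = J
    · rw [if_pos h1, h1, Equiv.swap_apply_left]
    · rw [if_neg h1]
      by_cases h2 : R = J'
      · rw [if_pos h2, h2, Equiv.swap_apply_right]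
      · rw [if_neg h2, Equiv.swap_apply_of_ne_of_ne h1 h2]
  have vJ : (J : ℕ) = j := rfl
  have vJ' : (J' : ℕ) = j + 1 := rfl
  rw [Fin.lt_def] at hPQ
  rw [Fin.lt_def, key P, key Q]
  by_cases hPJ : P = J
  · rw [if_pos hPJ]
    have hPv : (P : ℕ) = j := by rw [hPJ]
    have hQJ : ¬ Q = J := by
      intro h
      have : (Q : ℕ) = j := by rw [h]
      omega
    have hQJ' : ¬ Q = J' := by
      intro h
      rcases hS with hs|hs
      · exact hs (hPJ ▸ hP)
      · exact hs (h ▸ hQ)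
    rw [if_neg hQJ, if_neg hQJ']
    have h1 : (Q:ℕ) ≠ j + 1 := by
      intro hc
      exact hQJ' (Fin.ext (by rw [hc, vJ']))
    omega
  · rw [if_neg hPJ]
    by_cases hPJ' : P = J'
    · rw [if_pos hPJ']
      have hPv : (P : ℕ) = j + 1 := by rw [hPJ']
      have hQJ : ¬ Q = J := by
        intro h
        have : (Q : ℕ) = j := by rw [h]
        omega
      have hQJ' : ¬ Q = J' := by
        intro h
        have : (Q : ℕ) = j + 1 := by rw [h]
        omega
      rw [if_neg hQJ, if_neg hQJ']
      omega
    · rw [if_neg hPJ']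
      by_cases hQJ : Q = J
      · rw [if_pos hQJ]
        have : (Q : ℕ) = j := by rw [hQJ]
        omega
      · rw [if_neg hQJ]
        by_cases hQJ' : Q = J'
        · rw [if_pos hQJ']
          have hQv : (Q : ℕ) = j + 1 := by rw [hQJ']
          have hPj : (P:ℕ) ≠ j := by
            intro hc
            exact hPJ (Fin.ext (by rw [hc, vJ]))
          omega
        · rw [if_neg hQJ']
          exact hPQ

end SwapEmb

end SkewRS

namespace SkewRS

section SwapDefs

variable {d L : ℕ}

/-- middle-shape replacement map -/
noncomputable def swapMid {d L : ℕ} (hd : 0 < d) (hL : 0 < L) (x z β : Fin d → ℤ)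
    (h1 : CoCylInterlace d L x β) (h2 : CoCylInterlace d L z β) : Fin d → ℤ :=
  ((locEquiv hd hL x z (∑ i, β i)) ⟨β, h1, h2, rfl⟩).1

lemma swapMid_prop (hd : 0 < d) (hL : 0 < L) (x z β : Fin d → ℤ)
    (h1 : CoCylInterlace d L x β) (h2 : CoCylInterlace d L z β) :
    CoCylInterlace d L (swapMid hd hL x z β h1 h2) x ∧
    CoCylInterlace d L (swapMid hd hL x z β h1 h2) z ∧
    ∑ i, swapMid hd hL x z β h1 h2 i = (∑ i, x i) + (∑ i, z i) - ∑ i, β i :=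
  ((locEquiv hd hL x z (∑ i, β i)) ⟨β, h1, h2, rfl⟩).2

lemma locEquiv_cast (hd : 0 < d) (hL : 0 < L) (x z : Fin d → ℤ) {s s' : ℤ} (h : s = s')
    (c : Fin d → ℤ) (hc : CoCylInterlace d L x c ∧ CoCylInterlace d L z c ∧ ∑ i, c i = s) :
    ((locEquiv hd hL x z s) ⟨c, hc⟩).1 =
    ((locEquiv hd hL x z s') ⟨c, by rw [← h]; exact hc⟩).1 := by
  subst h; rfl

lemma swapMid_inj (hd : 0 < d) (hL : 0 < L) {x z β x' z' β' : Fin d → ℤ}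
    (hx : x = x') (hz : z = z')
    {h1 : CoCylInterlace d L x β} {h2 : CoCylInterlace d L z β}
    {h1' : CoCylInterlace d L x' β'} {h2' : CoCylInterlace d L z' β'}
    (h : swapMid hd hL x z β h1 h2 = swapMid hd hL x' z' β' h1' h2') : β = β' := by
  subst hx; subst hz
  have p1 := (swapMid_prop hd hL x z β h1 h2).2.2
  have p2 := (swapMid_prop hd hL x z β' h1' h2').2.2
  rw [h] at p1
  have hsum : (∑ i, β' i) = (∑ i, β i) := by omega
  unfold swapMid at h
  rw [locEquiv_cast hd hL x z hsum β' ⟨h1', h2', rfl⟩] at h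
  have := (locEquiv hd hL x z (∑ i, β i)).injective (Subtype.ext h)
  exact congrArg Subtype.val this

/-- inverse middle-shape replacement map -/
noncomputable def swapMidInv {d L : ℕ} (hd : 0 < d) (hL : 0 < L) (x z δ : Fin d → ℤ)
    (h1 : CoCylInterlace d L δ x) (h2 : CoCylInterlace d L δ z) : Fin d → ℤ :=
  ((locEquiv hd hL x z ((∑ i, x i) + (∑ i, z i) - ∑ i, δ i)).symm
    ⟨δ, h1, h2, by ring⟩).1

lemma swapMidInv_prop (hd : 0 < d) (hL : 0 < L) (x z δ : Fin d → ℤ)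
    (h1 : CoCylInterlace d L δ x) (h2 : CoCylInterlace d L δ z) :
    CoCylInterlace d L x (swapMidInv hd hL x z δ h1 h2) ∧
    CoCylInterlace d L z (swapMidInv hd hL x z δ h1 h2) ∧
    ∑ i, swapMidInv hd hL x z δ h1 h2 i = (∑ i, x i) + (∑ i, z i) - ∑ i, δ i :=
  ((locEquiv hd hL x z ((∑ i, x i) + (∑ i, z i) - ∑ i, δ i)).symm ⟨δ, h1, h2, by ring⟩).2

lemma locEquiv_symm_cast (hd : 0 < d) (hL : 0 < L) (x z : Fin d → ℤ) {s s' : ℤ} (h : s = s')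
    (c : Fin d → ℤ)
    (hc : CoCylInterlace d L c x ∧ CoCylInterlace d L c z ∧
      ∑ i, c i = (∑ i, x i) + (∑ i, z i) - s) :
    ((locEquiv hd hL x z s).symm ⟨c, hc⟩).1 =
    ((locEquiv hd hL x z s').symm ⟨c, by rw [← h]; exact hc⟩).1 := by
  subst h; rfl

lemma swapMidInv_inj (hd : 0 < d) (hL : 0 < L) {x z δ x' z' δ' : Fin d → ℤ}
    (hx : x = x') (hz : z = z')
    {h1 : CoCylInterlace d L δ x} {h2 : CoCylInterlace d L δ z}
    {h1' : CoCylInterlace d L δ' x'} {h2' : CoCylInterlace d L δ' z'}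
    (h : swapMidInv hd hL x z δ h1 h2 = swapMidInv hd hL x' z' δ' h1' h2') : δ = δ' := by
  subst hx; subst hz
  have p1 := (swapMidInv_prop hd hL x z δ h1 h2).2.2
  have p2 := (swapMidInv_prop hd hL x z δ' h1' h2').2.2
  rw [h] at p1
  have hsum : (∑ i, x i) + (∑ i, z i) - (∑ i, δ' i) =
      (∑ i, x i) + (∑ i, z i) - (∑ i, δ i) := by omega
  unfold swapMidInv at h
  rw [locEquiv_symm_cast hd hL x z hsum δ' ⟨h1', h2', by ring⟩] at h
  have := (locEquiv hd hL x z ((∑ i, x i) + (∑ i, z i) - ∑ i, δ i)).symm.injective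
    (Subtype.ext h)
  have h5 := congrArg Subtype.val this
  exact h5

end SwapDefs

section SwapEmb2

variable {k : ℕ}

lemma filter_card_swap (w v : Fin k → Bool) (e : Fin k ≃ Fin k)
    (hv : ∀ i, v i = w (e i)) (c : Bool) :
    (Finset.univ.filter fun i => v i = c).card =
      (Finset.univ.filter fun i => w i = c).card := by
  apply Finset.card_equiv e
  intro i
  simp [hv i]

lemma emb_swap {j : ℕ} (hj : j + 1 < k) (w v : Fin k → Bool)
    (hv : ∀ i, v i = w (Equiv.swap (⟨j, by omega⟩ : Fin k) ⟨j+1, hj⟩ i)) (c : Bool) {n : ℕ}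
    (hS : (⟨j, by omega⟩ : Fin k) ∉ (Finset.univ.filter fun i => w i = c) ∨
          (⟨j+1, hj⟩ : Fin k) ∉ (Finset.univ.filter fun i => w i = c))
    (hw : (Finset.univ.filter fun i => w i = c).card = n)
    (hvc : (Finset.univ.filter fun i => v i = c).card = n) (r : Fin n) :
    (Finset.univ.filter fun i => v i = c).orderEmbOfFin hvc r =
      Equiv.swap (⟨j, by omega⟩ : Fin k) ⟨j+1, hj⟩
        ((Finset.univ.filter fun i => w i = c).orderEmbOfFin hw r) := by
  have huniq := Finset.orderEmbOfFin_unique (s := Finset.univ.filter fun i => v i = c) hvc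
    (f := fun r => Equiv.swap (⟨j, by omega⟩ : Fin k) ⟨j+1, hj⟩
      ((Finset.univ.filter fun i => w i = c).orderEmbOfFin hw r)) ?_ ?_
  · exact (congrFun huniq r).symm
  · intro x
    rw [Finset.mem_filter]
    refine ⟨Finset.mem_univ _, ?_⟩
    rw [hv, Equiv.swap_apply_self]
    have := Finset.orderEmbOfFin_mem (Finset.univ.filter fun i => w i = c) hw x
    exact (Finset.mem_filter.mp this).2
  · intro r1 r2 h12
    exact swap_lt hj hS (Finset.orderEmbOfFin_mem _ hw r1)
      (Finset.orderEmbOfFin_mem _ hw r2)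
      ((Finset.orderEmbOfFin _ hw).strictMono h12)

end SwapEmb2

end SkewRS

namespace SkewRS

section SwapMain

variable {d L k p q : ℕ}

theorem swap_card (hd : 0 < d) (hL : 0 < L) (μ lam : Fin d → ℤ)
    (a : Fin p → ℕ) (b : Fin q → ℕ) (w v : Fin k → Bool) (j : ℕ) (hj : j + 1 < k)
    (hwj : w ⟨j, by omega⟩ = true) (hwj1 : w ⟨j+1, hj⟩ = false)
    (hv : ∀ i, v i = w (Equiv.swap (⟨j, by omega⟩ : Fin k) ⟨j+1, hj⟩ i))
    (hwp : (Finset.univ.filter fun i : Fin k => w i = true).card = p)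
    (hwq : (Finset.univ.filter fun i : Fin k => w i = false).card = q)
    (hvp : (Finset.univ.filter fun i : Fin k => v i = true).card = p)
    (hvq : (Finset.univ.filter fun i : Fin k => v i = false).card = q) :
    Nat.card (Tab L w hwp hwq μ lam a b) = Nat.card (Tab L v hvp hvq μ lam a b) := by
  have hjk : j < k := by omega
  set J : Fin k := ⟨j, by omega⟩ with hJdef
  set J' : Fin k := ⟨j+1, hj⟩ with hJ'def
  set e := Equiv.swap J J' with hedef
  set s0 : Fin (k+1) := ⟨j, by omega⟩ with hs0def
  set s1 : Fin (k+1) := ⟨j+1, by omega⟩ with hs1def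
  set s2 : Fin (k+1) := ⟨j+2, by omega⟩ with hs2def
  have hJcast : J.castSucc = s0 := rfl
  have hJsucc : J.succ = s1 := rfl
  have hJ'cast : J'.castSucc = s1 := rfl
  have hJ'succ : J'.succ = s2 := rfl
  have heJ : e J = J' := Equiv.swap_apply_left _ _
  have heJ' : e J' = J := Equiv.swap_apply_right _ _
  have hvJ : v J = false := by rw [hv J, heJ]; exact hwj1
  have hvJ' : v J' = true := by rw [hv J', heJ']; exact hwj
  have hvother : ∀ i, i ≠ J → i ≠ J' → v i = w i := by
    intro i h1 h2
    rw [hv i, Equiv.swap_apply_of_ne_of_ne h1 h2]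
  have hs0ne : s0 ≠ s1 := by
    intro hc; have := congrArg Fin.val hc; simp [hs0def, hs1def] at this
  have hs2ne : s2 ≠ s1 := by
    intro hc; have := congrArg Fin.val hc; simp [hs2def, hs1def] at this
  have h0ne : (0 : Fin (k+1)) ≠ s1 := by
    intro hc; have := congrArg Fin.val hc; simp [hs1def] at this
  have hlastne : (Fin.last k) ≠ s1 := by
    intro hc; have := congrArg Fin.val hc; simp [hs1def, Fin.last] at this; omega
  have hJf' : J' ∉ (Finset.univ.filter fun i : Fin k => w i = true) := by
    simp [hwj1]
  have hJf : J ∉ (Finset.univ.filter fun i : Fin k => w i = false) := by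
    simp [hwj]
  -- extraction of the two step conditions around the swap, for a w-tableau
  have extractW : ∀ T : Fin (k+1) → Fin d → ℤ, IsSkewRowStrictOsc d L k w μ lam T →
      CoCylInterlace d L (T s0) (T s1) ∧ CoCylInterlace d L (T s2) (T s1) := by
    intro T hT
    constructor
    · have h := hT.2.2 J
      rw [if_pos hwj] at h
      rwa [hJcast, hJsucc] at h
    · have h := hT.2.2 J'
      rw [if_neg (by simp [hwj1])] at h
      rwa [hJ'cast, hJ'succ] at h
  have extractV : ∀ T : Fin (k+1) → Fin d → ℤ, IsSkewRowStrictOsc d L k v μ lam T →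
      CoCylInterlace d L (T s1) (T s0) ∧ CoCylInterlace d L (T s1) (T s2) := by
    intro T hT
    constructor
    · have h := hT.2.2 J
      rw [if_neg (by simp [hvJ])] at h
      rwa [hJcast, hJsucc] at h
    · have h := hT.2.2 J'
      rw [if_pos hvJ'] at h
      rwa [hJ'cast, hJ'succ] at h
  -- forward injection
  have hle1 : Nat.card (Tab L w hwp hwq μ lam a b) ≤
      Nat.card (Tab L v hvp hvq μ lam a b) := by
    haveI : Finite {T : Fin (k + 1) → Fin d → ℤ //
        IsSkewRowStrictOsc d L k v μ lam T ∧ HasWtPlus d k p v hvp T a ∧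
        HasWtMinus d k q v hvq T b} := tab_finite (L := L) v hvp hvq μ lam a b
    apply Nat.card_le_card_of_injective
      (f := fun TT : Tab L w hwp hwq μ lam a b =>
        (⟨Function.update TT.1 s1
            (swapMid hd hL (TT.1 s0) (TT.1 s2) (TT.1 s1)
              (extractW TT.1 TT.2.1).1 (extractW TT.1 TT.2.1).2), by
          obtain ⟨T, hT⟩ := TT
          simp only []
          set δ := swapMid hd hL (T s0) (T s2) (T s1)
            (extractW T hT.1).1 (extractW T hT.1).2 with hδdef
          have hδp := swapMid_prop hd hL (T s0) (T s2) (T s1)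
            (extractW T hT.1).1 (extractW T hT.1).2
          rw [← hδdef] at hδp
          set T' := Function.update T s1 δ with hT'
          have hT's1 : T' s1 = δ := Function.update_self _ _ _
          have hT'o : ∀ i : Fin (k+1), i ≠ s1 → T' i = T i := by
            intro i hi
            exact Function.update_of_ne hi _ _
          refine ⟨⟨?_, ?_, ?_⟩, ?_, ?_⟩
          · rw [hT'o 0 h0ne]; exact hT.1.1
          · rw [hT'o (Fin.last k) hlastne]; exact hT.1.2.1
          · intro i
            by_cases hiJ : i = J
            · subst hiJ
              rw [if_neg (by simp [hvJ])]
              rw [hJcast, hJsucc, hT's1, hT'o s0 hs0ne]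
              exact hδp.1
            · by_cases hiJ' : i = J'
              · subst hiJ'
                rw [if_pos hvJ']
                rw [hJ'cast, hJ'succ, hT's1, hT'o s2 hs2ne]
                exact hδp.2.1
              · have hne1 : i.castSucc ≠ s1 := by
                  intro hc; have := congrArg Fin.val hc
                  simp [hs1def, Fin.coe_castSucc] at this
                  exact hiJ' (Fin.ext this)
                have hne2 : i.succ ≠ s1 := by
                  intro hc; have := congrArg Fin.val hc
                  simp [hs1def, Fin.val_succ] at this
                  exact hiJ (Fin.ext this)
                rw [hvother i hiJ hiJ', hT'o _ hne1, hT'o _ hne2]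
                exact hT.1.2.2 i
          · intro r
            simp only [Finset.coe_orderIsoOfFin_apply]
            rw [emb_swap hj w v hv true (Or.inr hJf') hwp hvp r]
            have hWr := hT.2.1 r
            simp only [Finset.coe_orderIsoOfFin_apply] at hWr
            set P := (Finset.univ.filter fun i : Fin k => w i = true).orderEmbOfFin hwp r
              with hPdef
            have hPmem : w P = true := by
              have := Finset.orderEmbOfFin_mem
                (Finset.univ.filter fun i : Fin k => w i = true) hwp r
              exact (Finset.mem_filter.mp this).2
            have hPJ' : P ≠ J' := by
              intro hc; rw [hc, hwj1] at hPmem; simp at hPmem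
            by_cases hPJ : P = J
            · rw [hPJ, heJ, hJ'succ, hJ'cast, hT's1, hT'o s2 hs2ne]
              rw [hPJ, hJsucc, hJcast] at hWr
              have hs := hδp.2.2
              omega
            · rw [Equiv.swap_apply_of_ne_of_ne hPJ hPJ']
              have hne1 : P.castSucc ≠ s1 := by
                intro hc; have := congrArg Fin.val hc
                simp [hs1def, Fin.coe_castSucc] at this
                exact hPJ' (Fin.ext this)
              have hne2 : P.succ ≠ s1 := by
                intro hc; have := congrArg Fin.val hc
                simp [hs1def, Fin.val_succ] at this
                exact hPJ (Fin.ext this)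
              rw [hT'o _ hne1, hT'o _ hne2]
              exact hWr
          · intro r
            simp only [Finset.coe_orderIsoOfFin_apply]
            rw [emb_swap hj w v hv false (Or.inl hJf) hwq hvq r.rev]
            have hWr := hT.2.2 r
            simp only [Finset.coe_orderIsoOfFin_apply] at hWr
            set Q := (Finset.univ.filter fun i : Fin k => w i = false).orderEmbOfFin hwq r.rev
              with hQdef
            have hQmem : w Q = false := by
              have := Finset.orderEmbOfFin_mem
                (Finset.univ.filter fun i : Fin k => w i = false) hwq r.rev
              exact (Finset.mem_filter.mp this).2
            have hQJ : Q ≠ J := by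
              intro hc; rw [hc, hwj] at hQmem; simp at hQmem
            by_cases hQJ' : Q = J'
            · rw [hQJ', heJ', hJsucc, hJcast, hT's1, hT'o s0 hs0ne]
              rw [hQJ', hJ'succ, hJ'cast] at hWr
              have hs := hδp.2.2
              omega
            · rw [Equiv.swap_apply_of_ne_of_ne hQJ hQJ']
              have hne1 : Q.castSucc ≠ s1 := by
                intro hc; have := congrArg Fin.val hc
                simp [hs1def, Fin.coe_castSucc] at this
                exact hQJ' (Fin.ext this)
              have hne2 : Q.succ ≠ s1 := by
                intro hc; have := congrArg Fin.val hc
                simp [hs1def, Fin.val_succ] at this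
                exact hQJ (Fin.ext this)
              rw [hT'o _ hne1, hT'o _ hne2]
              exact hWr⟩ : Tab L v hvp hvq μ lam a b))
    intro T1 T2 h12
    have hval := congrArg Subtype.val h12
    simp only [] at hval
    have hsame : ∀ i : Fin (k+1), i ≠ s1 → T1.1 i = T2.1 i := by
      intro i hi
      have := congrFun hval i
      rwa [Function.update_of_ne hi, Function.update_of_ne hi] at this
    have hδeq := congrFun hval s1
    rw [Function.update_self, Function.update_self] at hδeq
    have h0 : T1.1 s0 = T2.1 s0 := hsame s0 hs0ne
    have h2 : T1.1 s2 = T2.1 s2 := hsame s2 hs2ne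
    have hβ : T1.1 s1 = T2.1 s1 := swapMid_inj hd hL h0 h2 hδeq
    apply Subtype.ext
    funext i
    by_cases hi : i = s1
    · rw [hi]; exact hβ
    · exact hsame i hi
  -- backward injection
  have hle2 : Nat.card (Tab L v hvp hvq μ lam a b) ≤
      Nat.card (Tab L w hwp hwq μ lam a b) := by
    haveI : Finite {T : Fin (k + 1) → Fin d → ℤ //
        IsSkewRowStrictOsc d L k w μ lam T ∧ HasWtPlus d k p w hwp T a ∧
        HasWtMinus d k q w hwq T b} := tab_finite (L := L) w hwp hwq μ lam a b
    apply Nat.card_le_card_of_injective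
      (f := fun TT : Tab L v hvp hvq μ lam a b =>
        (⟨Function.update TT.1 s1
            (swapMidInv hd hL (TT.1 s0) (TT.1 s2) (TT.1 s1)
              (extractV TT.1 TT.2.1).1 (extractV TT.1 TT.2.1).2), by
          obtain ⟨T, hT⟩ := TT
          simp only []
          set β := swapMidInv hd hL (T s0) (T s2) (T s1)
            (extractV T hT.1).1 (extractV T hT.1).2 with hβdef
          have hβp := swapMidInv_prop hd hL (T s0) (T s2) (T s1)
            (extractV T hT.1).1 (extractV T hT.1).2
          rw [← hβdef] at hβp
          set T' := Function.update T s1 β with hT'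
          have hT's1 : T' s1 = β := Function.update_self _ _ _
          have hT'o : ∀ i : Fin (k+1), i ≠ s1 → T' i = T i := by
            intro i hi
            exact Function.update_of_ne hi _ _
          refine ⟨⟨?_, ?_, ?_⟩, ?_, ?_⟩
          · rw [hT'o 0 h0ne]; exact hT.1.1
          · rw [hT'o (Fin.last k) hlastne]; exact hT.1.2.1
          · intro i
            by_cases hiJ : i = J
            · subst hiJ
              rw [if_pos hwj]
              rw [hJcast, hJsucc, hT's1, hT'o s0 hs0ne]
              exact hβp.1
            · by_cases hiJ' : i = J'
              · subst hiJ'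
                rw [if_neg (by simp [hwj1])]
                rw [hJ'cast, hJ'succ, hT's1, hT'o s2 hs2ne]
                exact hβp.2.1
              · have hne1 : i.castSucc ≠ s1 := by
                  intro hc; have := congrArg Fin.val hc
                  simp [hs1def, Fin.coe_castSucc] at this
                  exact hiJ' (Fin.ext this)
                have hne2 : i.succ ≠ s1 := by
                  intro hc; have := congrArg Fin.val hc
                  simp [hs1def, Fin.val_succ] at this
                  exact hiJ (Fin.ext this)
                rw [← hvother i hiJ hiJ', hT'o _ hne1, hT'o _ hne2]
                exact hT.1.2.2 i
          · intro r
            simp only [Finset.coe_orderIsoOfFin_apply]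
            have hWr := hT.2.1 r
            simp only [Finset.coe_orderIsoOfFin_apply] at hWr
            rw [emb_swap hj w v hv true (Or.inr hJf') hwp hvp r] at hWr
            set P := (Finset.univ.filter fun i : Fin k => w i = true).orderEmbOfFin hwp r
              with hPdef
            have hPmem : w P = true := by
              have := Finset.orderEmbOfFin_mem
                (Finset.univ.filter fun i : Fin k => w i = true) hwp r
              exact (Finset.mem_filter.mp this).2
            have hPJ' : P ≠ J' := by
              intro hc; rw [hc, hwj1] at hPmem; simp at hPmem
            by_cases hPJ : P = J
            · rw [hPJ, heJ, hJ'succ, hJ'cast] at hWr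
              rw [hPJ, hJsucc, hJcast, hT's1, hT'o s0 hs0ne]
              have hs := hβp.2.2
              omega
            · rw [Equiv.swap_apply_of_ne_of_ne hPJ hPJ'] at hWr
              have hne1 : P.castSucc ≠ s1 := by
                intro hc; have := congrArg Fin.val hc
                simp [hs1def, Fin.coe_castSucc] at this
                exact hPJ' (Fin.ext this)
              have hne2 : P.succ ≠ s1 := by
                intro hc; have := congrArg Fin.val hc
                simp [hs1def, Fin.val_succ] at this
                exact hPJ (Fin.ext this)
              rw [hT'o _ hne1, hT'o _ hne2]
              exact hWr
          · intro r
            simp only [Finset.coe_orderIsoOfFin_apply]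
            have hWr := hT.2.2 r
            simp only [Finset.coe_orderIsoOfFin_apply] at hWr
            rw [emb_swap hj w v hv false (Or.inl hJf) hwq hvq r.rev] at hWr
            set Q := (Finset.univ.filter fun i : Fin k => w i = false).orderEmbOfFin hwq r.rev
              with hQdef
            have hQmem : w Q = false := by
              have := Finset.orderEmbOfFin_mem
                (Finset.univ.filter fun i : Fin k => w i = false) hwq r.rev
              exact (Finset.mem_filter.mp this).2
            have hQJ : Q ≠ J := by
              intro hc; rw [hc, hwj] at hQmem; simp at hQmem
            by_cases hQJ' : Q = J'
            · rw [hQJ', heJ', hJsucc, hJcast] at hWr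
              rw [hQJ', hJ'succ, hJ'cast, hT's1, hT'o s2 hs2ne]
              have hs := hβp.2.2
              omega
            · rw [Equiv.swap_apply_of_ne_of_ne hQJ hQJ'] at hWr
              have hne1 : Q.castSucc ≠ s1 := by
                intro hc; have := congrArg Fin.val hc
                simp [hs1def, Fin.coe_castSucc] at this
                exact hQJ' (Fin.ext this)
              have hne2 : Q.succ ≠ s1 := by
                intro hc; have := congrArg Fin.val hc
                simp [hs1def, Fin.val_succ] at this
                exact hQJ (Fin.ext this)
              rw [hT'o _ hne1, hT'o _ hne2]
              exact hWr⟩ : Tab L w hwp hwq μ lam a b))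
    intro T1 T2 h12
    have hval := congrArg Subtype.val h12
    simp only [] at hval
    have hsame : ∀ i : Fin (k+1), i ≠ s1 → T1.1 i = T2.1 i := by
      intro i hi
      have := congrFun hval i
      rwa [Function.update_of_ne hi, Function.update_of_ne hi] at this
    have hβeq := congrFun hval s1
    rw [Function.update_self, Function.update_self] at hβeq
    have h0 : T1.1 s0 = T2.1 s0 := hsame s0 hs0ne
    have h2 : T1.1 s2 = T2.1 s2 := hsame s2 hs2ne
    have hδ : T1.1 s1 = T2.1 s1 := swapMidInv_inj hd hL h0 h2 hβeq
    apply Subtype.ext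
    funext i
    by_cases hi : i = s1
    · rw [hi]; exact hδ
    · exact hsame i hi
  exact le_antisymm hle1 hle2

end SwapMain

end SkewRS

namespace SkewRS

section Connect

variable {k : ℕ}

def Msr {k : ℕ} (w : Fin k → Bool) : ℕ := ∑ i : Fin k, (if w i then (i : ℕ) else 0)

lemma Msr_le (w : Fin k → Bool) : Msr w ≤ k * k := by
  calc Msr w ≤ ∑ _i : Fin k, k := by
        apply Finset.sum_le_sum
        intro i _
        split
        · omega
        · omega
    _ = k * k := by
        simp [Finset.sum_const, Finset.card_univ, smul_eq_mul]

lemma Msr_swap (w : Fin k → Bool) (j : ℕ) (hj : j + 1 < k)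
    (hwj : w ⟨j, by omega⟩ = true) (hwj1 : w ⟨j+1, hj⟩ = false) :
    Msr (fun i => w (Equiv.swap (⟨j, by omega⟩ : Fin k) ⟨j+1, hj⟩ i)) = Msr w + 1 := by
  set J : Fin k := ⟨j, by omega⟩ with hJdef
  set J' : Fin k := ⟨j+1, hj⟩ with hJ'def
  set e := Equiv.swap J J' with hedef
  have step1 : Msr (fun i => w (e i)) = ∑ i : Fin k, (if w i then ((e.symm i : Fin k) : ℕ) else 0) := by
    unfold Msr
    apply Fintype.sum_equiv e
    intro i
    rw [Equiv.symm_apply_apply]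
  rw [step1]
  have hsymm : e.symm = e := Equiv.symm_swap _ _
  rw [hsymm]
  unfold Msr
  rw [Finset.sum_eq_sum_sdiff_singleton_add (Finset.mem_univ J)
    (fun i => if w i then ((e i : Fin k) : ℕ) else 0)]
  rw [Finset.sum_eq_sum_sdiff_singleton_add (Finset.mem_univ J)
    (fun i => if w i then (i : ℕ) else 0)]
  have hcong : ∀ i ∈ Finset.univ \ {J},
      (if w i then ((e i : Fin k) : ℕ) else 0) = (if w i then (i : ℕ) else 0) := by
    intro i hi
    rw [Finset.mem_sdiff, Finset.mem_singleton] at hi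
    by_cases hiJ' : i = J'
    · rw [hiJ', hwj1]
      simp
    · rw [Equiv.swap_apply_of_ne_of_ne hi.2 hiJ']
  rw [Finset.sum_congr rfl hcong]
  have hJval : (if w J then ((e J : Fin k) : ℕ) else 0) = j + 1 := by
    simp [hwj, hedef, Equiv.swap_apply_left, hJ'def]
  have hJval2 : (if w J then ((J : Fin k) : ℕ) else 0) = j := by
    exact if_pos hwj
  rw [hJval, hJval2]
  omega

/-- the canonical word with `p` pluses at the end -/
def canon (k p : ℕ) : Fin k → Bool := fun i => decide (k - p ≤ (i : ℕ))

lemma canon_card_true {p : ℕ} (hpk : p ≤ k) :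
    (Finset.univ.filter fun i : Fin k => canon k p i = true).card = p := by
  rcases Nat.eq_zero_or_pos p with hp | hp
  · subst hp
    rw [Finset.card_eq_zero, Finset.filter_eq_empty_iff]
    intro i _
    unfold canon
    simp only [decide_eq_true_iff]
    omega
  · have hlt : k - p < k := by omega
    have : (Finset.univ.filter fun i : Fin k => canon k p i = true) =
        Finset.Ici (⟨k - p, hlt⟩ : Fin k) := by
      ext i
      rw [Finset.mem_filter, Finset.mem_Ici]
      unfold canon
      simp only [Finset.mem_univ, true_and, decide_eq_true_iff]
      simp [Fin.le_def]
    rw [this, Fin.card_Ici]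
    show k - (k - p) = p
    omega

lemma cards_split (w : Fin k → Bool) :
    (Finset.univ.filter fun i : Fin k => w i = true).card +
    (Finset.univ.filter fun i : Fin k => w i = false).card = k := by
  have h := Finset.card_filter_add_card_filter_not
    (s := (Finset.univ : Finset (Fin k))) (p := fun i => w i = true)
  rw [Finset.card_univ, Fintype.card_fin] at h
  have e : (Finset.univ.filter fun i : Fin k => ¬ (w i = true)) =
      (Finset.univ.filter fun i : Fin k => w i = false) := by
    apply Finset.filter_congr
    intro i _
    simp
  rw [e] at h
  exact h

lemma canon_card_false {p : ℕ} (hpk : p ≤ k) :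
    (Finset.univ.filter fun i : Fin k => canon k p i = false).card = k - p := by
  have h := cards_split (canon k p)
  rw [canon_card_true hpk] at h
  omega

lemma eq_canon (w : Fin k → Bool)
    (hnd : ∀ (j : ℕ) (hj : j + 1 < k), ¬ (w ⟨j, by omega⟩ = true ∧ w ⟨j+1, hj⟩ = false)) :
    w = canon k ((Finset.univ.filter fun i : Fin k => w i = true).card) := by
  set p' := (Finset.univ.filter fun i : Fin k => w i = true).card with hp'
  have hp'k : p' ≤ k := by
    rw [hp']
    calc _ ≤ (Finset.univ : Finset (Fin k)).card := Finset.card_filter_le _ _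
      _ = k := by simp
  have up : ∀ (m : ℕ) (i : Fin k) (h : (i : ℕ) + m < k), w i = true → w ⟨(i : ℕ) + m, h⟩ = true := by
    intro m
    induction m with
    | zero =>
        intro i h hw
        have heq : (⟨(i : ℕ) + 0, h⟩ : Fin k) = i := Fin.ext (by show (i:ℕ) + 0 = (i:ℕ); omega)
        rw [heq]
        exact hw
    | succ m ih =>
        intro i h hw
        have h1 : (i : ℕ) + m < k := by omega
        have h2 := ih i h1 hw
        have h3 := hnd ((i : ℕ) + m) (by omega)
        rw [not_and] at h3
        have h4 := h3 h2
        have heq : (⟨(i : ℕ) + (m + 1), h⟩ : Fin k) = ⟨(i:ℕ) + m + 1, by omega⟩ :=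
          Fin.ext (by show (i:ℕ) + (m+1) = (i:ℕ) + m + 1; omega)
        rw [heq]
        cases hc : w ⟨(i:ℕ) + m + 1, by omega⟩
        · exact absurd hc h4
        · rfl
  funext i
  by_cases hw : w i = true
  · rw [hw]
    symm
    rw [canon, decide_eq_true_iff]
    have hsub : Finset.Ici i ⊆ Finset.univ.filter fun x : Fin k => w x = true := by
      intro x hx
      rw [Finset.mem_Ici] at hx
      rw [Finset.mem_filter]
      refine ⟨Finset.mem_univ _, ?_⟩
      rw [Fin.le_def] at hx
      have hxk : (i : ℕ) + ((x : ℕ) - (i : ℕ)) < k := by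
        have := x.2
        omega
      have := up ((x : ℕ) - (i : ℕ)) i hxk hw
      have heq : (⟨(i:ℕ) + ((x:ℕ) - (i:ℕ)), hxk⟩ : Fin k) = x :=
        Fin.ext (by show (i:ℕ) + ((x:ℕ) - (i:ℕ)) = (x:ℕ); omega)
      rw [heq] at this
      exact this
    have hcard := Finset.card_le_card hsub
    rw [Fin.card_Ici] at hcard
    rw [← hp'] at hcard
    omega
  · have hwf : w i = false := by
      cases hc : w i
      · rfl
      · exact absurd hc hw
    rw [hwf]
    symm
    rw [canon, decide_eq_false_iff_not]
    intro hge
    have hsub : (Finset.univ.filter fun x : Fin k => w x = true) ⊆ Finset.Ioi i := by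
      intro x hx
      rw [Finset.mem_filter] at hx
      rw [Finset.mem_Ioi]
      by_contra hle
      rw [not_lt] at hle
      rw [Fin.le_def] at hle
      have hxk : (x : ℕ) + ((i : ℕ) - (x : ℕ)) < k := by
        have := i.2
        omega
      have := up ((i : ℕ) - (x : ℕ)) x hxk hx.2
      have heq : (⟨(x:ℕ) + ((i:ℕ) - (x:ℕ)), hxk⟩ : Fin k) = i :=
        Fin.ext (by show (x:ℕ) + ((i:ℕ) - (x:ℕ)) = (i:ℕ); omega)
      rw [heq] at this
      exact hw this
    have hcard := Finset.card_le_card hsub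
    rw [Fin.card_Ioi] at hcard
    rw [← hp'] at hcard
    have := i.2
    omega

end Connect

end SkewRS

namespace SkewRS

section Main

variable {d L k p q : ℕ}

lemma card_eq_canon_nodescent (hd : 0 < d) (hL : 0 < L) (μ lam : Fin d → ℤ)
    (a : Fin p → ℕ) (b : Fin q → ℕ) (hpk : p ≤ k) (hqk : q = k - p)
    (w : Fin k → Bool)
    (hwp : (Finset.univ.filter fun i : Fin k => w i = true).card = p)
    (hwq : (Finset.univ.filter fun i : Fin k => w i = false).card = q)
    (hnd : ∀ (j : ℕ) (hj : j + 1 < k), ¬ (w ⟨j, by omega⟩ = true ∧ w ⟨j+1, hj⟩ = false)) :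
    Nat.card (Tab L w hwp hwq μ lam a b) =
    Nat.card (Tab L (canon k p) (canon_card_true hpk)
      (by rw [hqk]; exact canon_card_false hpk) μ lam a b) := by
  have hwcanon : w = canon k p := by
    have h := eq_canon w hnd
    rw [hwp] at h
    exact h
  subst hwcanon
  rfl

theorem card_eq_canon (hd : 0 < d) (hL : 0 < L) (μ lam : Fin d → ℤ)
    (a : Fin p → ℕ) (b : Fin q → ℕ) (hpk : p ≤ k) (hqk : q = k - p) :
    ∀ (N : ℕ) (w : Fin k → Bool)
      (hwp : (Finset.univ.filter fun i : Fin k => w i = true).card = p)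
      (hwq : (Finset.univ.filter fun i : Fin k => w i = false).card = q),
      k * k - Msr w ≤ N →
      Nat.card (Tab L w hwp hwq μ lam a b) =
      Nat.card (Tab L (canon k p) (canon_card_true hpk)
        (by rw [hqk]; exact canon_card_false hpk) μ lam a b) := by
  intro N
  induction N with
  | zero =>
      intro w hwp hwq hm
      by_cases hex : ∃ (j : ℕ) (hj : j + 1 < k), w ⟨j, by omega⟩ = true ∧ w ⟨j+1, hj⟩ = false
      · exfalso
        obtain ⟨j, hj, hw1, hw2⟩ := hex
        have hmv := Msr_swap w j hj hw1 hw2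
        have hb := Msr_le (fun i => w (Equiv.swap (⟨j, by omega⟩ : Fin k) ⟨j+1, hj⟩ i))
        omega
      · apply card_eq_canon_nodescent hd hL μ lam a b hpk hqk w hwp hwq
        intro j hj hc
        exact hex ⟨j, hj, hc⟩
  | succ N ih =>
      intro w hwp hwq hm
      by_cases hex : ∃ (j : ℕ) (hj : j + 1 < k), w ⟨j, by omega⟩ = true ∧ w ⟨j+1, hj⟩ = false
      · obtain ⟨j, hj, hw1, hw2⟩ := hex
        set v : Fin k → Bool :=
          fun i => w (Equiv.swap (⟨j, by omega⟩ : Fin k) ⟨j+1, hj⟩ i) with hvdef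
        have hve : ∀ i, v i = w (Equiv.swap (⟨j, by omega⟩ : Fin k) ⟨j+1, hj⟩ i) :=
          fun i => rfl
        have hvp : (Finset.univ.filter fun i : Fin k => v i = true).card = p := by
          rw [filter_card_swap w v (Equiv.swap (⟨j, by omega⟩ : Fin k) ⟨j+1, hj⟩) hve true]
          exact hwp
        have hvq : (Finset.univ.filter fun i : Fin k => v i = false).card = q := by
          rw [filter_card_swap w v (Equiv.swap (⟨j, by omega⟩ : Fin k) ⟨j+1, hj⟩) hve false]
          exact hwq
        have hsw := swap_card hd hL μ lam a b w v j hj hw1 hw2 hve hwp hwq hvp hvq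
        rw [hsw]
        apply ih v hvp hvq
        have hmv : Msr v = Msr w + 1 := Msr_swap w j hj hw1 hw2
        have hb := Msr_le v
        omega
      · apply card_eq_canon_nodescent hd hL μ lam a b hpk hqk w hwp hwq
        intro j hj hc
        exact hex ⟨j, hj, hc⟩

end Main

end SkewRS


/-- Row-strict skew correspondence: for type sequences `w`, `v` with the same number of
`+`'s and `−`'s, the number of skew `(d,L)`-cylindric row-strict `w`-oscillating
tableaux with given inner shape, outer shape and weights equals the corresponding number
for `v`. -/
theorem skew_rowstrict_count_independent_of_type_sequence
    (d L k p q : ℕ) (hd : 0 < d) (hL : 0 < L) (w v : Fin k → Bool)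
    (hwp : (Finset.univ.filter fun i : Fin k => w i = true).card = p)
    (hwq : (Finset.univ.filter fun i : Fin k => w i = false).card = q)
    (hvp : (Finset.univ.filter fun i : Fin k => v i = true).card = p)
    (hvq : (Finset.univ.filter fun i : Fin k => v i = false).card = q)
    (μ lam : Fin d → ℤ) (hμ : Antitone μ) (hlam : Antitone lam)
    (hμL : ∀ h : 0 < d, μ ⟨0, h⟩ - μ ⟨d - 1, Nat.sub_lt h Nat.one_pos⟩ ≤ (L : ℤ))
    (hlamL : ∀ h : 0 < d, lam ⟨0, h⟩ - lam ⟨d - 1, Nat.sub_lt h Nat.one_pos⟩ ≤ (L : ℤ))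
    (a : Fin p → ℕ) (b : Fin q → ℕ) :
    Nat.card {T : Fin (k + 1) → Fin d → ℤ //
        IsSkewRowStrictOsc d L k w μ lam T ∧ HasWtPlus d k p w hwp T a ∧
        HasWtMinus d k q w hwq T b} =
    Nat.card {T : Fin (k + 1) → Fin d → ℤ //
        IsSkewRowStrictOsc d L k v μ lam T ∧ HasWtPlus d k p v hvp T a ∧
        HasWtMinus d k q v hvq T b} := by
  have hpk : p ≤ k := by
    rw [← hwp]
    calc (Finset.univ.filter fun i : Fin k => w i = true).card
        ≤ (Finset.univ : Finset (Fin k)).card := Finset.card_filter_le _ _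
      _ = k := by simp
  have hqk : q = k - p := by
    have h1 := SkewRS.cards_split w
    rw [hwp, hwq] at h1
    omega
  have h1 := SkewRS.card_eq_canon hd hL μ lam a b hpk hqk (k*k) w hwp hwq (by omega)
  have h2 := SkewRS.card_eq_canon hd hL μ lam a b hpk hqk (k*k) v hvp hvq (by omega)
  exact h1.trans h2.symm
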